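/- In the boundary region graph T̂, if boundary strategies μ of Min and χ of Max are mutual best responses from a configuration q (i.e., A_Min(q,μ,χ) = sup_{χ'} A_Min(q,μ,χ') over all boundary strategies χ' of Max, and A_Max(q,μ,χ) = inf_{μ'} A_Max(q,μ',χ) over all boundary strategies μ' of Min), then any type-preserving boundary strategies μ|q and χ|q that agree with μ and χ respectively on all finite runs starting from q are mutual best responses from every configuration q' in the same region as q. -/

import Mathlib

noncomputable section

attribute [local instance] Classical.propDecidable

/-- A two-player (Min/Max) game arena with real-valued step costs. -/
structure Arena (Conf Move : Type) where
  Tr : Conf → Move → Conf → Prop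
  cost : Conf → Move → ℝ
  IsMin : Conf → Prop

namespace Arena

variable {Conf Move : Type}

/-- A finite run in the arena. -/
structure FinRun (G : Arena Conf Move) where
  n : ℕ
  q : Fin (n + 1) → Conf
  m : Fin n → Move
  valid : ∀ i : Fin n, G.Tr (q i.castSucc) (m i) (q i.succ)

/-- The last configuration of a finite run. -/
def FinRun.last {G : Arena Conf Move} (r : G.FinRun) : Conf := r.q (Fin.last r.n)

/-- The first configuration of a finite run. -/
def FinRun.first {G : Arena Conf Move} (r : G.FinRun) : Conf := r.q 0

/-- The trivial run consisting of a single configuration. -/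
def single (G : Arena Conf Move) (q0 : Conf) : G.FinRun :=
  ⟨0, fun _ => q0, Fin.elim0, fun i => i.elim0⟩

/-- Extending a finite run by one transition. -/
def FinRun.extend {G : Arena Conf Move} (r : G.FinRun) (mv : Move) (q' : Conf)
    (h : G.Tr r.last mv q') : G.FinRun where
  n := r.n + 1
  q := Fin.snoc r.q q'
  m := Fin.snoc r.m mv
  valid := by
    intro i
    induction i using Fin.lastCases with
    | last =>
        rw [Fin.succ_last, Fin.snoc_castSucc, Fin.snoc_last]
        exact (Fin.snoc_last (α := fun _ => Conf) (p := r.q) q').symm ▸ h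
    | cast j =>
        rw [Fin.snoc_castSucc, Fin.succ_castSucc, Fin.snoc_castSucc, Fin.snoc_castSucc]
        exact r.valid j

/-- Strategies of player Min: mappings from finite runs to moves that are
available whenever the last configuration belongs to Min. -/
def MinStrategy (G : Arena Conf Move) : Type :=
  {σ : G.FinRun → Move // ∀ r : G.FinRun, G.IsMin r.last → ∃ q', G.Tr r.last (σ r) q'}

/-- Strategies of player Max. -/
def MaxStrategy (G : Arena Conf Move) : Type :=
  {σ : G.FinRun → Move // ∀ r : G.FinRun, ¬ G.IsMin r.last → ∃ q', G.Tr r.last (σ r) q'}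

/-- A strategy is positional if its choice depends only on the last configuration. -/
def Positional {G : Arena Conf Move} (σ : G.FinRun → Move) : Prop :=
  ∀ r r' : G.FinRun, r.last = r'.last → σ r = σ r'

/-- The finite prefixes of the unique play from `q0` in which Min uses `μ`
and Max uses `χ`. -/
def play (G : Arena Conf Move) (μ : G.MinStrategy) (χ : G.MaxStrategy) (q0 : Conf) :
    ℕ → G.FinRun
  | 0 => G.single q0
  | n + 1 =>
    let r := G.play μ χ q0 n
    if h : G.IsMin r.last then
      r.extend (μ.1 r) (Classical.choose (μ.2 r h)) (Classical.choose_spec (μ.2 r h))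
    else
      r.extend (χ.1 r) (Classical.choose (χ.2 r h)) (Classical.choose_spec (χ.2 r h))

/-- Total cost (e.g. total time) of a finite run. -/
def FinRun.time {G : Arena Conf Move} (r : G.FinRun) : ℝ :=
  ∑ i : Fin r.n, G.cost (r.q i.castSucc) (r.m i)

/-- Payoff of player Min (to be minimised): limsup of average cost. -/
def AMin (G : Arena Conf Move) (q0 : Conf) (μ : G.MinStrategy) (χ : G.MaxStrategy) : ℝ :=
  Filter.limsup (fun n : ℕ => (G.play μ χ q0 n).time / n) Filter.atTop

/-- Payoff of player Max (to be maximised): liminf of average cost. -/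
def AMax (G : Arena Conf Move) (q0 : Conf) (μ : G.MinStrategy) (χ : G.MaxStrategy) : ℝ :=
  Filter.liminf (fun n : ℕ => (G.play μ χ q0 n).time / n) Filter.atTop

/-- Upper value of the game at `q0`. -/
def upperVal (G : Arena Conf Move) (q0 : Conf) : ℝ :=
  ⨅ μ : G.MinStrategy, ⨆ χ : G.MaxStrategy, G.AMin q0 μ χ

/-- Lower value of the game at `q0`. -/
def lowerVal (G : Arena Conf Move) (q0 : Conf) : ℝ :=
  ⨆ χ : G.MaxStrategy, ⨅ μ : G.MinStrategy, G.AMax q0 μ χ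

/-- The value of the game at `q0` (meaningful when the game is determined). -/
def val (G : Arena Conf Move) (q0 : Conf) : ℝ := G.upperVal q0

end Arena
/-- `k`-bounded clock valuations. -/
def IsVal (k : ℕ) {C : Type} (ν : C → ℝ) : Prop := ∀ c, 0 ≤ ν c ∧ ν c ≤ (k : ℝ)

/-- Two clock valuations satisfy exactly the same simple clock constraints
`c ⋈ i` and `c − c' ⋈ i` with `i ∈ {0,…,k}` and `⋈ ∈ {<,=,>}` (hence also ≤, ≥). -/
def RegEq (k : ℕ) {C : Type} (ν ν' : C → ℝ) : Prop :=
  ∀ i : ℕ, i ≤ k → ∀ c c' : C,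
    ((ν c < (i : ℝ) ↔ ν' c < (i : ℝ)) ∧ (ν c = (i : ℝ) ↔ ν' c = (i : ℝ)) ∧
      ((i : ℝ) < ν c ↔ (i : ℝ) < ν' c)) ∧
    ((ν c - ν c' < (i : ℝ) ↔ ν' c - ν' c' < (i : ℝ)) ∧
      (ν c - ν c' = (i : ℝ) ↔ ν' c - ν' c' = (i : ℝ)) ∧
      ((i : ℝ) < ν c - ν c' ↔ (i : ℝ) < ν' c - ν' c'))

/-- An average-time game on a (bounded) timed automaton: a timed automaton
together with a partition of locations between players Min and Max. -/
structure TimedGame where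
  L : Type
  C : Type
  A : Type
  finL : Finite L
  finC : Finite C
  finA : Finite A
  k : ℕ
  S : Set (L × (C → ℝ))
  En : A → Set (L × (C → ℝ))
  δ : L → A → L
  ϱ : A → Set C
  LMin : Set L
  bounded : ∀ s ∈ S, IsVal k s.2
  S_zone : (∀ (ℓ : L) (ν ν' : C → ℝ), RegEq k ν ν' → ((ℓ, ν) ∈ S ↔ (ℓ, ν') ∈ S)) ∧
    ∀ ℓ : L, Convex ℝ {ν : C → ℝ | (ℓ, ν) ∈ S}
  En_sub : ∀ a, En a ⊆ S
  En_zone : ∀ a : A,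
    (∀ (ℓ : L) (ν ν' : C → ℝ), RegEq k ν ν' → ((ℓ, ν) ∈ En a ↔ (ℓ, ν') ∈ En a)) ∧
    ∀ ℓ : L, Convex ℝ {ν : C → ℝ | (ℓ, ν) ∈ En a}
  nonstuck : ∀ s ∈ S, ∃ (t : ℝ) (a : A), 0 ≤ t ∧
    (∀ t', 0 ≤ t' → t' ≤ t → (s.1, fun c => s.2 c + t') ∈ S) ∧
    ((s.1, fun c => s.2 c + t) ∈ En a) ∧
    ((δ s.1 a, fun c => if c ∈ ϱ a then 0 else s.2 c + t) ∈ S)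

namespace TimedGame

/-- Configurations of the timed automaton. -/
abbrev Q (T : TimedGame) : Type := T.L × (T.C → ℝ)

/-- Resetting the clocks in `X` to zero. -/
def resetv (T : TimedGame) (ν : T.C → ℝ) (X : Set T.C) : T.C → ℝ :=
  fun c => if c ∈ X then 0 else ν c

/-- The successor configuration after the timed action `τ = (t, a)`. -/
def tsucc (T : TimedGame) (s : T.Q) (τ : ℝ × T.A) : T.Q :=
  (T.δ s.1 τ.2, T.resetv (fun c => s.2 c + τ.1) (T.ϱ τ.2))

/-- The transition relation `s →_τ s'` of the timed automaton. -/
def Trans (T : TimedGame) (s : T.Q) (τ : ℝ × T.A) (s' : T.Q) : Prop :=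
  0 ≤ τ.1 ∧ (∀ t', 0 ≤ t' → t' ≤ τ.1 → (s.1, fun c => s.2 c + t') ∈ T.S) ∧
  ((s.1, fun c => s.2 c + τ.1) ∈ T.En τ.2) ∧ s' = T.tsucc s τ ∧ s' ∈ T.S

/-- The game arena of the average-time game played on the timed automaton. -/
def taArena (T : TimedGame) : Arena {s : T.Q // s ∈ T.S} (ℝ × T.A) where
  Tr := fun s τ s' => T.Trans s.1 τ s'.1
  cost := fun _ τ => τ.1
  IsMin := fun s => s.1.1 ∈ T.LMin

/-- A clock region: an equivalence class of the region equivalence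
(restricted to `k`-bounded valuations). -/
def IsClockRegion (T : TimedGame) (P : Set (T.C → ℝ)) : Prop :=
  ∃ ν : T.C → ℝ, P = {ν' | IsVal T.k ν' ∧ RegEq T.k ν ν'}

/-- Regions: pairs of a location and a clock region. -/
def Region (T : TimedGame) : Type :=
  T.L × {P : Set (T.C → ℝ) // T.IsClockRegion P}

/-- The clock region of a valuation. -/
def clockRegionOf (T : TimedGame) (ν : T.C → ℝ) : {P : Set (T.C → ℝ) // T.IsClockRegion P} :=
  ⟨{ν' | IsVal T.k ν' ∧ RegEq T.k ν ν'}, ⟨ν, rfl⟩⟩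

/-- The region `[s]` of a configuration `s`. -/
def regionOf (T : TimedGame) (s : T.Q) : T.Region := (s.1, T.clockRegionOf s.2)

/-- The configurations `Ω` of the region graphs: pairs of a configuration
of the timed automaton and a region. -/
abbrev Omega (T : TimedGame) : Type := T.Q × T.Region

/-- `(s, (ℓ, P))` is a state of the closed region graph: the locations match
and `s`'s valuation lies in the closure of the clock region `P`. -/
def barS (T : TimedGame) (q : T.Omega) : Prop :=
  q.1.1 = q.2.1 ∧ q.1.2 ∈ closure q.2.2.1

/-- `(s, (ℓ, P))` is a state of the region graph: the locations match and
`s`'s valuation lies in the clock region `P`. -/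
def tildeS (T : TimedGame) (q : T.Omega) : Prop :=
  q.1.1 = q.2.1 ∧ q.1.2 ∈ q.2.2.1

/-- `R →_* R'` : the region `R'` is a time successor of `R`. -/
def timeSucc (T : TimedGame) (R R' : T.Region) : Prop :=
  R.1 = R'.1 ∧ ∀ ν ∈ R.2.1, ∃ t : ℝ, 0 ≤ t ∧
    (∀ t', 0 ≤ t' → t' ≤ t → (R.1, fun c => ν c + t') ∈ T.S) ∧
    (fun c => ν c + t) ∈ R'.2.1

/-- The discrete transition `s →^a s'` of the timed automaton. -/
def astep (T : TimedGame) (s : T.Q) (a : T.A) (s' : T.Q) : Prop :=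
  s ∈ T.S ∧ s' ∈ T.S ∧ s ∈ T.En a ∧ s' = (T.δ s.1 a, T.resetv s.2 (T.ϱ a))

/-- `R →^a R'` at the level of regions. -/
def regAct (T : TimedGame) (R : T.Region) (a : T.A) (R' : T.Region) : Prop :=
  ∃ ν ∈ R.2.1, ∃ ν' ∈ R'.2.1, T.astep (R.1, ν) a (R'.1, ν')

/-- Moves of the region graphs: a delay, an intermediate region, and an action. -/
abbrev RMove (T : TimedGame) : Type := ℝ × T.Region × T.A

/-- Transitions underlying pre-runs: `(s', R') = succ((s,R), (t,R'',a))` with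
`R →_* R'' →^a R'`. -/
def preTrans (T : TimedGame) (q : T.Omega) (m : T.RMove) (q' : T.Omega) : Prop :=
  0 ≤ m.1 ∧ T.timeSucc q.2 m.2.1 ∧ T.regAct m.2.1 m.2.2 q'.2 ∧
  q'.1 = T.tsucc q.1 (m.1, m.2.2)

/-- Labelled transitions of the closed region graph `T̄`. -/
def cTrans (T : TimedGame) (q : T.Omega) (m : T.RMove) (q' : T.Omega) : Prop :=
  T.preTrans q m q' ∧ T.barS q ∧ T.barS q' ∧
  (fun c => q.1.2 c + m.1) ∈ closure m.2.1.2.1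

/-- Labelled transitions of the boundary region graph `T̂`: additionally the
intermediate valuation lies on the boundary of the intermediate region. -/
def bTrans (T : TimedGame) (q : T.Omega) (m : T.RMove) (q' : T.Omega) : Prop :=
  T.cTrans q m q' ∧ (fun c => q.1.2 c + m.1) ∈ frontier m.2.1.2.1

/-- Labelled transitions of the region graph `T̃`. -/
def rTrans (T : TimedGame) (q : T.Omega) (m : T.RMove) (q' : T.Omega) : Prop :=
  T.preTrans q m q' ∧ T.tildeS q ∧ T.tildeS q' ∧
  (fun c => q.1.2 c + m.1) ∈ m.2.1.2.1

/-- The arena of pre-runs over `Ω`. -/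
def preArena (T : TimedGame) : Arena T.Omega T.RMove where
  Tr := T.preTrans
  cost := fun _ m => m.1
  IsMin := fun q => q.2.1 ∈ T.LMin

/-- Finite pre-runs. -/
abbrev PreRunF (T : TimedGame) : Type := (T.preArena).FinRun

/-- Pre-strategies of Min. -/
abbrev MinPre (T : TimedGame) : Type := (T.preArena).MinStrategy

/-- Pre-strategies of Max. -/
abbrev MaxPre (T : TimedGame) : Type := (T.preArena).MaxStrategy

/-- A pre-strategy of Min is a strategy in the closed region graph `T̄`
if it always waits into the closure of the chosen intermediate region. -/
def MinClosed (T : TimedGame) (μ : T.MinPre) : Prop :=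
  ∀ r : T.PreRunF,
    (fun c => (Arena.FinRun.last r).1.2 c + (μ.1 r).1) ∈ closure (μ.1 r).2.1.2.1

def MaxClosed (T : TimedGame) (χ : T.MaxPre) : Prop :=
  ∀ r : T.PreRunF,
    (fun c => (Arena.FinRun.last r).1.2 c + (χ.1 r).1) ∈ closure (χ.1 r).2.1.2.1

/-- Admissible strategies: strategies in the region graph `T̃`. -/
def MinAdmissible (T : TimedGame) (μ : T.MinPre) : Prop :=
  ∀ r : T.PreRunF,
    (fun c => (Arena.FinRun.last r).1.2 c + (μ.1 r).1) ∈ (μ.1 r).2.1.2.1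

def MaxAdmissible (T : TimedGame) (χ : T.MaxPre) : Prop :=
  ∀ r : T.PreRunF,
    (fun c => (Arena.FinRun.last r).1.2 c + (χ.1 r).1) ∈ (χ.1 r).2.1.2.1

/-- Boundary strategies of Min: the delay is the **infimum** of the delays
reaching the closure of the chosen intermediate region. -/
def MinBoundary (T : TimedGame) (μ : T.MinPre) : Prop :=
  ∀ r : T.PreRunF,
    (μ.1 r).1 = sInf {t : ℝ | 0 ≤ t ∧
      (fun c => (Arena.FinRun.last r).1.2 c + t) ∈ closure (μ.1 r).2.1.2.1}

/-- Boundary strategies of Max: the delay is the **supremum** of the delays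
reaching the closure of the chosen intermediate region. -/
def MaxBoundary (T : TimedGame) (χ : T.MaxPre) : Prop :=
  ∀ r : T.PreRunF,
    (χ.1 r).1 = sSup {t : ℝ | 0 ≤ t ∧
      (fun c => (Arena.FinRun.last r).1.2 c + t) ∈ closure (χ.1 r).2.1.2.1}

/-- The sequence of regions visited by a finite pre-run (its type, part 1). -/
def typeConfs (T : TimedGame) (r : T.PreRunF) : ℕ → Option T.Region :=
  fun i => if h : i < r.n + 1 then some ((r.q ⟨i, h⟩).2) else none

/-- The sequence of intermediate regions and actions of a finite pre-run
(its type, part 2). -/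
def typeMoves (T : TimedGame) (r : T.PreRunF) : ℕ → Option (T.Region × T.A) :=
  fun i => if h : i < r.n then some ((r.m ⟨i, h⟩).2) else none

/-- Two finite pre-runs have the same type. -/
def sameType (T : TimedGame) (r r' : T.PreRunF) : Prop :=
  T.typeConfs r = T.typeConfs r' ∧ T.typeMoves r = T.typeMoves r'

/-- The waiting time `t(s, α)` of the boundary timed action `α = (b, c, a)`. -/
def tOf (T : TimedGame) (s : T.Q) (α : ℕ × T.C × T.A) : ℝ :=
  if s.2 α.2.1 ≤ (α.1 : ℝ) then (α.1 : ℝ) - s.2 α.2.1 else 0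

/-- Type-preserving boundary strategies of Min: runs of the same type are
assigned the same intermediate region, action and boundary timed action. -/
def MinTP (T : TimedGame) (μ : T.MinPre) : Prop :=
  T.MinBoundary μ ∧
  ∀ r r' : T.PreRunF, T.sameType r r' →
    (μ.1 r).2 = (μ.1 r').2 ∧
    ∃ (b : ℕ) (c : T.C), b ≤ T.k ∧
      (μ.1 r).1 = T.tOf (Arena.FinRun.last r).1 (b, c, (μ.1 r).2.2) ∧
      (μ.1 r').1 = T.tOf (Arena.FinRun.last r').1 (b, c, (μ.1 r').2.2)

def MaxTP (T : TimedGame) (χ : T.MaxPre) : Prop :=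
  T.MaxBoundary χ ∧
  ∀ r r' : T.PreRunF, T.sameType r r' →
    (χ.1 r).2 = (χ.1 r').2 ∧
    ∃ (b : ℕ) (c : T.C), b ≤ T.k ∧
      (χ.1 r).1 = T.tOf (Arena.FinRun.last r).1 (b, c, (χ.1 r).2.2) ∧
      (χ.1 r').1 = T.tOf (Arena.FinRun.last r').1 (b, c, (χ.1 r').2.2)

/-- `μ_ε` is `ε`-close to the type-preserving boundary strategy `μ` of Min. -/
def EpsCloseMin (T : TimedGame) (μ με : T.MinPre) (ε : ℝ) : Prop :=
  ∀ r : T.PreRunF, (με.1 r).2 = (μ.1 r).2 ∧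
    (fun c => (Arena.FinRun.last r).1.2 c + (με.1 r).1) ∈ (μ.1 r).2.1.2.1 ∧
    (με.1 r).1 ≤ (μ.1 r).1 + ε

/-- `χ_ε` is `ε`-close to the type-preserving boundary strategy `χ` of Max. -/
def EpsCloseMax (T : TimedGame) (χ χε : T.MaxPre) (ε : ℝ) : Prop :=
  ∀ r : T.PreRunF, (χε.1 r).2 = (χ.1 r).2 ∧
    (fun c => (Arena.FinRun.last r).1.2 c + (χε.1 r).1) ∈ (χ.1 r).2.1.2.1 ∧
    (χ.1 r).1 - ε ≤ (χε.1 r).1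

/-- Upper value of the game on the subgraph of region graphs whose strategies
are the pre-strategies satisfying `PMin`, `PMax` respectively. -/
def upperG (T : TimedGame) (PMin : T.MinPre → Prop) (PMax : T.MaxPre → Prop)
    (q : T.Omega) : ℝ :=
  ⨅ μ : {μ : T.MinPre // PMin μ}, ⨆ χ : {χ : T.MaxPre // PMax χ},
    Arena.AMin T.preArena q μ.1 χ.1

/-- Lower value. -/
def lowerG (T : TimedGame) (PMin : T.MinPre → Prop) (PMax : T.MaxPre → Prop)
    (q : T.Omega) : ℝ :=
  ⨆ χ : {χ : T.MaxPre // PMax χ}, ⨅ μ : {μ : T.MinPre // PMin μ},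
    Arena.AMax T.preArena q μ.1 χ.1

def upperBar (T : TimedGame) : T.Omega → ℝ := T.upperG T.MinClosed T.MaxClosed
def lowerBar (T : TimedGame) : T.Omega → ℝ := T.lowerG T.MinClosed T.MaxClosed
/-- The value of the average-time game on the closed region graph `T̄`. -/
def valBar (T : TimedGame) : T.Omega → ℝ := T.upperBar

def upperHat (T : TimedGame) : T.Omega → ℝ := T.upperG T.MinBoundary T.MaxBoundary
def lowerHat (T : TimedGame) : T.Omega → ℝ := T.lowerG T.MinBoundary T.MaxBoundary
/-- The value of the average-time game on the boundary region graph `T̂`. -/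
def valHat (T : TimedGame) : T.Omega → ℝ := T.upperHat

def upperTilde (T : TimedGame) : T.Omega → ℝ := T.upperG T.MinAdmissible T.MaxAdmissible
def lowerTilde (T : TimedGame) : T.Omega → ℝ := T.lowerG T.MinAdmissible T.MaxAdmissible
/-- The value of the average-time game on the region graph `T̃`. -/
def valTilde (T : TimedGame) : T.Omega → ℝ := T.upperTilde

/-- A function is simple on a set `X` of configurations. -/
def SimpleOn (T : TimedGame) (X : Set T.Omega) (F : T.Omega → ℝ) : Prop :=
  (∃ e : ℤ, ∀ q ∈ X, F q = (e : ℝ)) ∨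
  (∃ (e : ℤ) (c : T.C), ∀ q ∈ X, F q = (e : ℝ) - q.1.2 c)

/-- A function on the configurations of the closed region graph is regionally
simple. -/
def RegionallySimple (T : TimedGame) (F : T.Omega → ℝ) : Prop :=
  ∀ R : T.Region, T.SimpleOn {q : T.Omega | T.barS q ∧ q.2 = R} F

/-- A function on the configurations of the closed region graph is regionally
constant. -/
def RegionallyConstant (T : TimedGame) (F : T.Omega → ℝ) : Prop :=
  ∀ R : T.Region, ∃ v : ℝ, ∀ q : T.Omega, T.barS q → q.2 = R → F q = v

/-- The configuration `(s, [s])` of the region graphs determined by a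
configuration `s` of the timed automaton. -/
def confOf (T : TimedGame) (s : T.Q) : T.Omega := (s, T.regionOf s)

/-- A region is thin if some clock has an integer value throughout its closure. -/
def Thin (T : TimedGame) (R : T.Region) : Prop :=
  ∃ c : T.C, ∀ ν ∈ closure R.2.1, ∃ m : ℤ, ν c = (m : ℝ)

/-- `R'` is the immediate time successor of `R`. -/
def ImmTimeSucc (T : TimedGame) (R R' : T.Region) : Prop :=
  R.1 = R'.1 ∧ ∀ ν ∈ R.2.1, ∃ ε : ℝ, 0 < ε ∧
    ∀ t : ℝ, 0 < t → t < ε → (fun c => ν c + t) ∈ R'.2.1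

end TimedGame
section AuxBasic

variable {k : ℕ} {C : Type}

theorem aux_regEq_refl (ν : C → ℝ) : RegEq k ν ν := by
  intro i hi c c'; exact ⟨⟨Iff.rfl, Iff.rfl, Iff.rfl⟩, Iff.rfl, Iff.rfl, Iff.rfl⟩

theorem aux_regEq_symm {ν ν' : C → ℝ} (h : RegEq k ν ν') : RegEq k ν' ν := by
  intro i hi c c'
  obtain ⟨⟨h1, h2, h3⟩, h4, h5, h6⟩ := h i hi c c'
  exact ⟨⟨h1.symm, h2.symm, h3.symm⟩, h4.symm, h5.symm, h6.symm⟩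

theorem aux_regEq_trans {ν₁ ν₂ ν₃ : C → ℝ} (h : RegEq k ν₁ ν₂) (h' : RegEq k ν₂ ν₃) :
    RegEq k ν₁ ν₃ := by
  intro i hi c c'
  obtain ⟨⟨h1, h2, h3⟩, h4, h5, h6⟩ := h i hi c c'
  obtain ⟨⟨g1, g2, g3⟩, g4, g5, g6⟩ := h' i hi c c'
  exact ⟨⟨h1.trans g1, h2.trans g2, h3.trans g3⟩, h4.trans g4, h5.trans g5, h6.trans g6⟩

/-- The set of `k`-bounded valuations is closed. -/
theorem aux_isClosed_isVal : IsClosed {ν : C → ℝ | IsVal k ν} := by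
  have : {ν : C → ℝ | IsVal k ν} = ⋂ c : C, ((fun ν : C → ℝ => ν c) ⁻¹' Set.Icc 0 (k : ℝ)) := by
    ext ν
    simp only [Set.mem_setOf_eq, Set.mem_iInter, Set.mem_preimage, Set.mem_Icc, IsVal]
  rw [this]
  exact isClosed_iInter fun c => IsClosed.preimage (continuous_apply c) isClosed_Icc

end AuxBasic

namespace TimedGame

variable {T : TimedGame}

theorem aux_region_rebase {P : Set (T.C → ℝ)} (h : T.IsClockRegion P) {w : T.C → ℝ}
    (hw : w ∈ P) : P = {z | IsVal T.k z ∧ RegEq T.k w z} := by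
  obtain ⟨ν, rfl⟩ := h
  obtain ⟨hwv, hwe⟩ := hw
  ext z
  constructor
  · rintro ⟨hzv, hze⟩; exact ⟨hzv, aux_regEq_trans (aux_regEq_symm hwe) hze⟩
  · rintro ⟨hzv, hze⟩; exact ⟨hzv, aux_regEq_trans hwe hze⟩

theorem aux_mem_region_of_regEq {P : Set (T.C → ℝ)} (h : T.IsClockRegion P) {w z : T.C → ℝ}
    (hw : w ∈ P) (hzv : IsVal T.k z) (hze : RegEq T.k w z) : z ∈ P := by
  rw [aux_region_rebase h hw]; exact ⟨hzv, hze⟩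

theorem aux_regEq_of_mem {P : Set (T.C → ℝ)} (h : T.IsClockRegion P) {w z : T.C → ℝ}
    (hw : w ∈ P) (hz : z ∈ P) : RegEq T.k w z := by
  rw [aux_region_rebase h hw] at hz; exact hz.2

theorem aux_isVal_of_mem {P : Set (T.C → ℝ)} (h : T.IsClockRegion P) {z : T.C → ℝ}
    (hz : z ∈ P) : IsVal T.k z := by
  obtain ⟨ν, rfl⟩ := h; exact hz.1

theorem aux_isVal_of_mem_closure {P : Set (T.C → ℝ)} (h : T.IsClockRegion P) {z : T.C → ℝ}
    (hz : z ∈ closure P) : IsVal T.k z := by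
  have : closure P ⊆ {ν : T.C → ℝ | IsVal T.k ν} :=
    closure_minimal (fun x hx => aux_isVal_of_mem h hx) aux_isClosed_isVal
  exact this hz

/-- Two clock regions sharing `RegEq`-related points are equal. -/
theorem aux_region_unique {P Q : Set (T.C → ℝ)} (hP : T.IsClockRegion P) (hQ : T.IsClockRegion Q)
    {w z : T.C → ℝ} (hw : w ∈ P) (hz : z ∈ Q) (hwz : RegEq T.k w z) : P = Q := by
  have hzP : z ∈ P := aux_mem_region_of_regEq hP hw (aux_isVal_of_mem hQ hz) hwz
  rw [aux_region_rebase hP hzP, aux_region_rebase hQ hz]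

end TimedGame
namespace TimedGame

variable {T : TimedGame}

theorem aux_isVal_reset {ν : T.C → ℝ} (X : Set T.C) (hv : IsVal T.k ν) :
    IsVal T.k (T.resetv ν X) := by
  intro c
  by_cases hc : c ∈ X <;> simp only [resetv, if_pos, if_neg, hc, if_true, if_false]
  · exact ⟨le_refl 0, Nat.cast_nonneg _⟩
  · exact hv c

theorem aux_regEq_reset {ν ν' : T.C → ℝ} (X : Set T.C) (hv : IsVal T.k ν) (hv' : IsVal T.k ν')
    (h : RegEq T.k ν ν') : RegEq T.k (T.resetv ν X) (T.resetv ν' X) := by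
  intro i hi c c'
  have h0c' := (h 0 (Nat.zero_le _) c' c').1
  have hic := (h i hi c c').1
  have hic' := (h i hi c' c').1
  have hdiff := (h i hi c c').2
  have hvc' : (0:ℝ) ≤ ν c' := (hv c').1
  have hvc'2 : (0:ℝ) ≤ ν' c' := (hv' c').1
  constructor
  · -- single clock part for c
    by_cases hc : c ∈ X <;> simp only [resetv, hc, if_pos, if_neg, if_true, if_false]
    · simp
    · exact hic
  · -- difference part
    by_cases hc : c ∈ X <;> by_cases hc' : c' ∈ X <;>
      simp only [resetv, hc, hc', if_pos, if_neg, if_true, if_false]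
    · simp
    · -- c ∈ X, c' ∉ X : compare -ν c' with i
      rcases Nat.eq_zero_or_pos i with hi0 | hipos
      · subst hi0
        simp only [Nat.cast_zero]
        constructor
        · constructor
          · intro hx; have h1 : 0 < ν c' := by linarith
            have h2 : ((0:ℕ):ℝ) < ν' c' := h0c'.2.2.1 (by simpa using h1)
            simp only [Nat.cast_zero] at h2; linarith
          · intro hx; have h1 : 0 < ν' c' := by linarith
            have h2 : ((0:ℕ):ℝ) < ν c' := h0c'.2.2.2 (by simpa using h1)
            simp only [Nat.cast_zero] at h2; linarith
        constructor
        · constructor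
          · intro hx; have h1 : ν c' = 0 := by linarith
            have h2 : ν' c' = ((0:ℕ):ℝ) := h0c'.2.1.1 (by simpa using h1)
            simp only [Nat.cast_zero] at h2; linarith
          · intro hx; have h1 : ν' c' = 0 := by linarith
            have h2 : ν c' = ((0:ℕ):ℝ) := h0c'.2.1.2 (by simpa using h1)
            simp only [Nat.cast_zero] at h2; linarith
        · constructor
          · intro hx; linarith
          · intro hx; linarith
      · have hip : (1:ℝ) ≤ (i:ℝ) := by exact_mod_cast hipos
        constructor
        · constructor
          · intro _; linarith
          · intro _; linarith
        constructor
        · constructor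
          · intro hx; linarith
          · intro hx; linarith
        · constructor
          · intro hx; linarith
          · intro hx; linarith
    · -- c ∉ X, c' ∈ X : compare ν c with i, same as single clock part
      simpa using hic
    · simpa using hdiff

end TimedGame
section Tri

/-- From forward implications plus trichotomy, obtain the iffs. -/
theorem aux_tri {x y i : ℝ} (h1 : x < i → y < i) (h2 : x = i → y = i) (h3 : i < x → i < y) :
    (x < i ↔ y < i) ∧ (x = i ↔ y = i) ∧ (i < x ↔ i < y) := by
  refine ⟨⟨h1, ?_⟩, ⟨h2, ?_⟩, ⟨h3, ?_⟩⟩ <;> intro h <;>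
    rcases lt_trichotomy x i with hx | hx | hx
  · exact hx
  · exact absurd (h2 hx) (by linarith)
  · exact absurd (h3 hx) (by linarith)
  · exact absurd (h1 hx) (by linarith)
  · exact hx
  · exact absurd (h3 hx) (by linarith)
  · exact absurd (h1 hx) (by linarith)
  · exact absurd (h2 hx) (by linarith)
  · exact hx

end Tri

/-- Closed version of the difference constraints of the region of `p`. -/
def aux_DiffOK (k : ℕ) {C : Type} (p y : C → ℝ) : Prop :=
  ∀ i : ℕ, i ≤ k → ∀ c c' : C,
    (p c - p c' < (i : ℝ) → y c - y c' ≤ (i : ℝ)) ∧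
    (p c - p c' = (i : ℝ) → y c - y c' = (i : ℝ)) ∧
    ((i : ℝ) < p c - p c' → (i : ℝ) ≤ y c - y c')

theorem aux_isClosed_diffOK {k : ℕ} {C : Type} (p : C → ℝ) :
    IsClosed {y : C → ℝ | aux_DiffOK k p y} := by
  have : {y : C → ℝ | aux_DiffOK k p y} =
      ⋂ (i : ℕ), ⋂ (_ : i ≤ k), ⋂ (c : C), ⋂ (c' : C),
        ({y : C → ℝ | p c - p c' < (i : ℝ) → y c - y c' ≤ (i : ℝ)} ∩
         {y : C → ℝ | p c - p c' = (i : ℝ) → y c - y c' = (i : ℝ)} ∩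
         {y : C → ℝ | (i : ℝ) < p c - p c' → (i : ℝ) ≤ y c - y c'}) := by
    ext y
    simp only [Set.mem_setOf_eq, Set.mem_iInter, Set.mem_inter_iff, aux_DiffOK]
    exact ⟨fun h i hi c c' => ⟨⟨(h i hi c c').1, (h i hi c c').2.1⟩, (h i hi c c').2.2⟩,
      fun h i hi c c' => ⟨(h i hi c c').1.1, (h i hi c c').1.2, (h i hi c c').2⟩⟩
  rw [this]
  refine isClosed_iInter fun i => isClosed_iInter fun hi => isClosed_iInter fun c =>
    isClosed_iInter fun c' => (IsClosed.inter (IsClosed.inter ?_ ?_) ?_)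
  · by_cases h : p c - p c' < (i : ℝ)
    · have : {y : C → ℝ | p c - p c' < (i : ℝ) → y c - y c' ≤ (i : ℝ)} =
          {y : C → ℝ | y c - y c' ≤ (i : ℝ)} := by ext y; simp [h]
      rw [this]
      exact isClosed_le ((continuous_apply c).sub (continuous_apply c')) continuous_const
    · have : {y : C → ℝ | p c - p c' < (i : ℝ) → y c - y c' ≤ (i : ℝ)} = Set.univ := by
        ext y; simp [h]
      rw [this]; exact isClosed_univ
  · by_cases h : p c - p c' = (i : ℝ)
    · have : {y : C → ℝ | p c - p c' = (i : ℝ) → y c - y c' = (i : ℝ)} =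
          {y : C → ℝ | y c - y c' = (i : ℝ)} := by ext y; simp [h]
      rw [this]
      exact isClosed_eq ((continuous_apply c).sub (continuous_apply c')) continuous_const
    · have : {y : C → ℝ | p c - p c' = (i : ℝ) → y c - y c' = (i : ℝ)} = Set.univ := by
        ext y; simp [h]
      rw [this]; exact isClosed_univ
  · by_cases h : (i : ℝ) < p c - p c'
    · have : {y : C → ℝ | (i : ℝ) < p c - p c' → (i : ℝ) ≤ y c - y c'} =
          {y : C → ℝ | (i : ℝ) ≤ y c - y c'} := by ext y; simp [h]
      rw [this]
      exact isClosed_le continuous_const ((continuous_apply c).sub (continuous_apply c'))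
    · have : {y : C → ℝ | (i : ℝ) < p c - p c' → (i : ℝ) ≤ y c - y c'} = Set.univ := by
        ext y; simp [h]
      rw [this]; exact isClosed_univ

theorem aux_diffOK_of_regEq {k : ℕ} {C : Type} {p w : C → ℝ} (h : RegEq k p w) :
    aux_DiffOK k p w := by
  intro i hi c c'
  obtain ⟨_, h4, h5, h6⟩ := h i hi c c'
  exact ⟨fun hx => le_of_lt (h4.1 hx), fun hx => h5.1 hx, fun hx => le_of_lt (h6.1 hx)⟩

theorem aux_diffOK_shift {k : ℕ} {C : Type} {p y : C → ℝ} (t : ℝ) (h : aux_DiffOK k p y) :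
    aux_DiffOK k p (fun c => y c + t) := by
  intro i hi c c'
  have h3 := h i hi c c'
  refine ⟨fun hx => ?_, fun hx => ?_, fun hx => ?_⟩
  · show y c + t - (y c' + t) ≤ (i : ℝ); have := h3.1 hx; linarith
  · show y c + t - (y c' + t) = (i : ℝ); have := h3.2.1 hx; linarith
  · show (i : ℝ) ≤ y c + t - (y c' + t); have := h3.2.2 hx; linarith

namespace TimedGame

variable {T : TimedGame}

/-- All of the closure of the clock region of `p` lies in the box `[⌊p⌋, ⌈p⌉]`. -/
theorem aux_clos_subset_box {P : Set (T.C → ℝ)} (hP : T.IsClockRegion P) {p : T.C → ℝ}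
    (hp : p ∈ P) : ∀ z ∈ closure P, ∀ c, ((⌊p c⌋ : ℝ) ≤ z c ∧ z c ≤ (⌈p c⌉ : ℝ)) := by
  have hclosed : IsClosed {z : T.C → ℝ | ∀ c, (⌊p c⌋ : ℝ) ≤ z c ∧ z c ≤ (⌈p c⌉ : ℝ)} := by
    have : {z : T.C → ℝ | ∀ c, (⌊p c⌋ : ℝ) ≤ z c ∧ z c ≤ (⌈p c⌉ : ℝ)} =
        ⋂ c : T.C, ((fun z : T.C → ℝ => z c) ⁻¹' Set.Icc (⌊p c⌋ : ℝ) (⌈p c⌉ : ℝ)) := by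
      ext z; simp [Set.mem_Icc, Set.mem_iInter]
    rw [this]
    exact isClosed_iInter fun c => IsClosed.preimage (continuous_apply c) isClosed_Icc
  have hpv : IsVal T.k p := aux_isVal_of_mem hP hp
  have hsub : P ⊆ {z : T.C → ℝ | ∀ c, (⌊p c⌋ : ℝ) ≤ z c ∧ z c ≤ (⌈p c⌉ : ℝ)} := by
    intro z hz c
    have hzv : IsVal T.k z := aux_isVal_of_mem hP hz
    have hze : RegEq T.k p z := aux_regEq_of_mem hP hp hz
    constructor
    · -- floor bound
      have h0 : (0 : ℤ) ≤ ⌊p c⌋ := Int.floor_nonneg.2 (hpv c).1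
      set i : ℕ := (⌊p c⌋).toNat with hidef
      have hir : (i : ℝ) = (⌊p c⌋ : ℝ) := by
        rw [hidef]; exact_mod_cast congrArg (fun x : ℤ => (x : ℝ)) (Int.toNat_of_nonneg h0)
      have hik : i ≤ T.k := by
        have h1 : ((⌊p c⌋ : ℝ)) ≤ (T.k : ℝ) := le_trans (Int.floor_le _) (hpv c).2
        have : (i : ℝ) ≤ (T.k : ℝ) := by rw [hir]; exact h1
        exact_mod_cast this
      have atom := (hze i hik c c).1
      have hfl : (i : ℝ) ≤ p c := by rw [hir]; exact Int.floor_le _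
      rcases eq_or_lt_of_le hfl with heq | hlt
      · have := atom.2.1.1 heq.symm
        rw [← hir, this]
      · have := atom.2.2.1 hlt
        rw [← hir]; linarith
    · -- ceil bound
      have h0 : (0 : ℤ) ≤ ⌈p c⌉ := Int.ceil_nonneg (hpv c).1
      set i : ℕ := (⌈p c⌉).toNat with hidef
      have hir : (i : ℝ) = ((⌈p c⌉ : ℤ) : ℝ) := by
        rw [hidef]; exact_mod_cast congrArg (fun x : ℤ => (x : ℝ)) (Int.toNat_of_nonneg h0)
      have hik : i ≤ T.k := by
        have h1 : ⌈p c⌉ ≤ (T.k : ℤ) := Int.ceil_le.2 (by exact_mod_cast (hpv c).2)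
        have : (i : ℝ) ≤ (T.k : ℝ) := by rw [hir]; exact_mod_cast h1
        exact_mod_cast this
      have atom := (hze i hik c c).1
      have hcl : p c ≤ (i : ℝ) := by rw [hir]; exact Int.le_ceil _
      rcases eq_or_lt_of_le hcl with heq | hlt
      · have := atom.2.1.1 heq
        rw [← hir]; linarith [this]
      · have := atom.1.1 hlt
        rw [← hir]; linarith
  exact fun z hz => (closure_minimal hsub hclosed) hz

/-- Segment argument: a point of the closed box satisfying the closed difference
constraints lies in the closure of the clock region of `p`. -/
theorem aux_mem_closure_of_box {P : Set (T.C → ℝ)} (hP : T.IsClockRegion P) {p : T.C → ℝ}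
    (hp : p ∈ P) {z : T.C → ℝ}
    (hbox : ∀ c, (⌊p c⌋ : ℝ) ≤ z c ∧ z c ≤ (⌈p c⌉ : ℝ))
    (hdiff : aux_DiffOK T.k p z) : z ∈ closure P := by
  have hpv : IsVal T.k p := aux_isVal_of_mem hP hp
  set w : ℕ → T.C → ℝ := fun m c => z c + (1 / ((m : ℝ) + 1)) * (p c - z c) with hw
  have hzv : IsVal T.k z := by
    intro c
    have h1 := (hbox c).1
    have h2 := (hbox c).2
    have h3 : (0 : ℝ) ≤ (⌊p c⌋ : ℝ) := by
      have : (0 : ℤ) ≤ ⌊p c⌋ := Int.floor_nonneg.2 (hpv c).1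
      exact_mod_cast this
    have h4 : ((⌈p c⌉ : ℤ) : ℝ) ≤ (T.k : ℝ) := by
      have : ⌈p c⌉ ≤ (T.k : ℤ) := Int.ceil_le.2 (by exact_mod_cast (hpv c).2)
      exact_mod_cast this
    exact ⟨by linarith, by linarith⟩
  have hmem : ∀ m : ℕ, w m ∈ P := by
    intro m
    set lam : ℝ := 1 / ((m : ℝ) + 1) with hlam
    have hlam0 : 0 < lam := by positivity
    have hlam1 : lam ≤ 1 := by
      rw [hlam, div_le_one (by positivity)]
      linarith [Nat.cast_nonneg (α := ℝ) m]
    have hwv : IsVal T.k (w m) := by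
      intro c
      have h1 := (hzv c).1
      have h2 := (hzv c).2
      have h3 := (hpv c).1
      have h4 := (hpv c).2
      constructor
      · have : w m c = (1 - lam) * z c + lam * p c := by rw [hw]; ring
        rw [this]
        have e1 : 0 ≤ (1 - lam) * z c := mul_nonneg (by linarith) h1
        have e2 : 0 ≤ lam * p c := mul_nonneg (le_of_lt hlam0) h3
        linarith
      · have : w m c = (1 - lam) * z c + lam * p c := by rw [hw]; ring
        rw [this]
        have e1 : (1 - lam) * z c ≤ (1 - lam) * (T.k : ℝ) :=
          mul_le_mul_of_nonneg_left h2 (by linarith)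
        have e2 : lam * p c ≤ lam * (T.k : ℝ) := mul_le_mul_of_nonneg_left h4 (le_of_lt hlam0)
        nlinarith
    refine aux_mem_region_of_regEq hP hp hwv ?_
    intro i hi c c'
    constructor
    · -- single clock
      refine aux_tri ?_ ?_ ?_
      · intro hx
        have hcl : ⌈p c⌉ ≤ (i : ℤ) := Int.ceil_le.2 (by exact_mod_cast le_of_lt hx)
        have hz2 : z c ≤ (i : ℝ) := le_trans (hbox c).2 (by exact_mod_cast hcl)
        have : w m c = (1 - lam) * z c + lam * p c := by rw [hw]; ring
        rw [this]
        nlinarith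
      · intro hx
        have e1 : (⌊p c⌋ : ℝ) = (i : ℝ) := by
          rw [show p c = ((i : ℤ) : ℝ) by rw [Int.cast_natCast]; exact hx, Int.floor_intCast, Int.cast_natCast]
        have e2 : ((⌈p c⌉ : ℤ) : ℝ) = (i : ℝ) := by
          rw [show p c = ((i : ℤ) : ℝ) by rw [Int.cast_natCast]; exact hx, Int.ceil_intCast, Int.cast_natCast]
        have hz2 : z c = (i : ℝ) := le_antisymm (by linarith [(hbox c).2]) (by linarith [(hbox c).1])
        have : w m c = (1 - lam) * z c + lam * p c := by rw [hw]; ring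
        rw [this, hz2, hx]; ring
      · intro hx
        have hfl : (i : ℤ) ≤ ⌊p c⌋ := Int.le_floor.2 (by exact_mod_cast le_of_lt hx)
        have hz2 : (i : ℝ) ≤ z c := le_trans (by exact_mod_cast hfl) (hbox c).1
        have : w m c = (1 - lam) * z c + lam * p c := by rw [hw]; ring
        rw [this]
        nlinarith
    · -- differences
      have hd := hdiff i hi c c'
      have hwd : w m c - w m c' = (1 - lam) * (z c - z c') + lam * (p c - p c') := by
        rw [hw]; ring
      refine aux_tri ?_ ?_ ?_
      · intro hx
        have hz2 := hd.1 hx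
        rw [hwd]; nlinarith
      · intro hx
        have hz2 := hd.2.1 hx
        rw [hwd, hz2, hx]; ring
      · intro hx
        have hz2 := hd.2.2 hx
        rw [hwd]; nlinarith
  have htend : Filter.Tendsto w Filter.atTop (nhds z) := by
    rw [tendsto_pi_nhds]
    intro c
    have h1 : Filter.Tendsto (fun m : ℕ => (1 / ((m : ℝ) + 1)) * (p c - z c))
        Filter.atTop (nhds 0) := by
      simpa using tendsto_one_div_add_atTop_nhds_zero_nat.mul_const (p c - z c)
    have := h1.const_add (z c)
    simpa [hw] using this
  exact mem_closure_of_tendsto htend (Filter.Eventually.of_forall fun m => hmem m)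

end TimedGame
theorem aux_regEq_diff_le_int {k : ℕ} {C : Type} {ν₁ ν : C → ℝ} (h : RegEq k ν₁ ν) (d : ℤ)
    (hd1 : -(k : ℤ) ≤ d) (hd2 : d ≤ (k : ℤ)) (c c' : C) :
    (ν₁ c - ν₁ c' ≤ (d : ℝ) ↔ ν c - ν c' ≤ (d : ℝ)) := by
  rcases le_or_gt 0 d with hd0 | hd0
  · set i : ℕ := d.toNat with hidef
    have hir : (i : ℝ) = (d : ℝ) := by
      rw [hidef]; exact_mod_cast congrArg (fun x : ℤ => (x : ℝ)) (Int.toNat_of_nonneg hd0)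
    have hik : i ≤ k := by
      have : (i : ℝ) ≤ (k : ℝ) := by rw [hir]; exact_mod_cast hd2
      exact_mod_cast this
    have A := (h i hik c c').2
    constructor
    · intro hx
      rcases eq_or_lt_of_le hx with he | hl
      · have := A.2.1.1 (by rw [hir]; exact he)
        rw [hir] at this; linarith
      · have := A.1.1 (by rw [hir]; exact hl)
        rw [hir] at this; linarith
    · intro hx
      rcases eq_or_lt_of_le hx with he | hl
      · have := A.2.1.2 (by rw [hir]; exact he)
        rw [hir] at this; linarith
      · have := A.1.2 (by rw [hir]; exact hl)
        rw [hir] at this; linarith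
  · set i : ℕ := (-d).toNat with hidef
    have hir : (i : ℝ) = -(d : ℝ) := by
      have : ((-d).toNat : ℤ) = -d := Int.toNat_of_nonneg (by omega)
      rw [hidef]
      have := congrArg (fun x : ℤ => (x : ℝ)) this
      push_cast at this ⊢
      linarith
    have hik : i ≤ k := by
      have : (i : ℝ) ≤ (k : ℝ) := by
        rw [hir]
        have h9 : (-d : ℤ) ≤ (k : ℤ) := by omega
        have : ((-d : ℤ) : ℝ) ≤ ((k:ℤ) : ℝ) := by exact_mod_cast h9
        push_cast at this
        linarith
      exact_mod_cast this
    have A := (h i hik c' c).2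
    constructor
    · intro hx
      have hx' : (i : ℝ) ≤ ν₁ c' - ν₁ c := by rw [hir]; linarith
      rcases eq_or_lt_of_le hx' with he | hl
      · have := A.2.1.1 he.symm
        rw [hir] at this; linarith
      · have := A.2.2.1 hl
        rw [hir] at this; linarith
    · intro hx
      have hx' : (i : ℝ) ≤ ν c' - ν c := by rw [hir]; linarith
      rcases eq_or_lt_of_le hx' with he | hl
      · have := A.2.1.2 he.symm
        rw [hir] at this; linarith
      · have := A.2.2.2 hl
        rw [hir] at this; linarith

namespace TimedGame

variable {T : TimedGame}

/-- The key lemma: over the closure of a clock region `R`, the boundary delays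
(infimum and supremum of delays into the closure of a time-successor region `P`)
are given by fixed boundary timed actions. -/
theorem aux_key (hCne : Nonempty T.C) {R P : Set (T.C → ℝ)} (hR : T.IsClockRegion R)
    (hP : T.IsClockRegion P) (hRne : R.Nonempty) {p : T.C → ℝ} (hp : p ∈ P)
    (hts : ∀ ν ∈ R, ∃ t : ℝ, 0 ≤ t ∧ (fun c => ν c + t) ∈ P) :
    ∃ (bi bs : ℝ) (ci cs : T.C), 0 ≤ bi ∧ bi ≤ (T.k : ℝ) ∧ 0 ≤ bs ∧ bs ≤ (T.k : ℝ) ∧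
      ∀ y ∈ closure R,
        sInf {t : ℝ | 0 ≤ t ∧ (fun c => y c + t) ∈ closure P} = max 0 (bi - y ci) ∧
        sSup {t : ℝ | 0 ≤ t ∧ (fun c => y c + t) ∈ closure P} = max 0 (bs - y cs) ∧
        sInf {t : ℝ | 0 ≤ t ∧ (fun c => y c + t) ∈ closure P} ∈
          {t : ℝ | 0 ≤ t ∧ (fun c => y c + t) ∈ closure P} ∧
        sSup {t : ℝ | 0 ≤ t ∧ (fun c => y c + t) ∈ closure P} ∈
          {t : ℝ | 0 ≤ t ∧ (fun c => y c + t) ∈ closure P} := by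
  have hfin : Finite T.C := T.finC
  have hpv : IsVal T.k p := aux_isVal_of_mem hP hp
  set L : T.C → ℝ := fun c => (⌊p c⌋ : ℝ) with hLdef
  set U : T.C → ℝ := fun c => (⌈p c⌉ : ℝ) with hUdef
  obtain ⟨ν₁, hν₁⟩ := hRne
  -- bounds for L and U
  have hL0 : ∀ c, 0 ≤ L c := by
    intro c
    have h9 : (0 : ℤ) ≤ ⌊p c⌋ := Int.floor_nonneg.2 (hpv c).1
    show (0:ℝ) ≤ (⌊p c⌋ : ℝ)
    exact_mod_cast h9
  have hLk : ∀ c, L c ≤ (T.k : ℝ) := by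
    intro c; exact le_trans (Int.floor_le _) (hpv c).2
  have hU0 : ∀ c, 0 ≤ U c := by
    intro c
    have h9 : (0 : ℤ) ≤ ⌈p c⌉ := Int.ceil_nonneg (hpv c).1
    show (0:ℝ) ≤ (⌈p c⌉ : ℝ)
    exact_mod_cast h9
  have hUk : ∀ c, U c ≤ (T.k : ℝ) := by
    intro c
    have h9 : ⌈p c⌉ ≤ (T.k : ℤ) := Int.ceil_le.2 (by exact_mod_cast (hpv c).2)
    show ((⌈p c⌉ : ℤ) : ℝ) ≤ ((T.k : ℕ) : ℝ)
    exact_mod_cast h9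
  -- choose the uniform argmin/argmax clocks at ν₁
  have hex : ∃ cs : T.C, ∀ c : T.C, U cs - ν₁ cs ≤ U c - ν₁ c := by
    obtain ⟨cs, _, hcs⟩ := Set.exists_min_image Set.univ (fun c => U c - ν₁ c)
      (Set.finite_univ) ⟨Classical.arbitrary T.C, Set.mem_univ _⟩
    exact ⟨cs, fun c => hcs c (Set.mem_univ c)⟩
  obtain ⟨cs, hcs⟩ := hex
  have hex' : ∃ ci : T.C, ∀ c : T.C, L c - ν₁ c ≤ L ci - ν₁ ci := by
    obtain ⟨ci, _, hci⟩ := Set.exists_max_image Set.univ (fun c => L c - ν₁ c)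
      (Set.finite_univ) ⟨Classical.arbitrary T.C, Set.mem_univ _⟩
    exact ⟨ci, fun c => hci c (Set.mem_univ c)⟩
  obtain ⟨ci, hci⟩ := hex'
  -- (1) difference constraints hold on the closure of R
  have hdiffall : ∀ y ∈ closure R, aux_DiffOK T.k p y := by
    have hsub : R ⊆ {y | aux_DiffOK T.k p y} := by
      intro ν hν
      obtain ⟨t, ht0, htP⟩ := hts ν hν
      have hre : RegEq T.k p (fun c => ν c + t) := aux_regEq_of_mem hP hp htP
      have h2 := aux_diffOK_shift (-t) (aux_diffOK_of_regEq hre)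
      have he : (fun c => (fun c' => ν c' + t) c + (-t)) = ν := by funext c; ring
      rw [he] at h2
      exact h2
    exact fun y hy => (closure_minimal hsub (aux_isClosed_diffOK p)) hy
  -- (2) bounds on the closure of R
  have hbounds : ∀ y ∈ closure R, (∀ c c', L c - y c ≤ U c' - y c') ∧ (∀ c, 0 ≤ U c - y c) := by
    have hclosed : IsClosed {y : T.C → ℝ |
        (∀ c c', L c - y c ≤ U c' - y c') ∧ (∀ c, 0 ≤ U c - y c)} := by
      have : {y : T.C → ℝ | (∀ c c', L c - y c ≤ U c' - y c') ∧ (∀ c, 0 ≤ U c - y c)} =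
          (⋂ (c : T.C), ⋂ (c' : T.C), {y : T.C → ℝ | L c - y c ≤ U c' - y c'}) ∩
          (⋂ (c : T.C), {y : T.C → ℝ | 0 ≤ U c - y c}) := by
        ext y
        simp only [Set.mem_setOf_eq, Set.mem_inter_iff, Set.mem_iInter]
      rw [this]
      refine IsClosed.inter ?_ ?_
      · refine isClosed_iInter fun c => isClosed_iInter fun c' => ?_
        exact isClosed_le (continuous_const.sub (continuous_apply c))
          (continuous_const.sub (continuous_apply c'))
      · refine isClosed_iInter fun c => ?_
        exact isClosed_le continuous_const (continuous_const.sub (continuous_apply c))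
    have hsub : R ⊆ {y : T.C → ℝ |
        (∀ c c', L c - y c ≤ U c' - y c') ∧ (∀ c, 0 ≤ U c - y c)} := by
      intro ν hν
      obtain ⟨t, ht0, htP⟩ := hts ν hν
      have hbox := aux_clos_subset_box hP hp _ (subset_closure htP)
      constructor
      · intro c c'
        have h1 : L c ≤ ν c + t := by simpa [hLdef] using (hbox c).1
        have h2 : ν c' + t ≤ U c' := by simpa [hUdef] using (hbox c').2
        linarith
      · intro c
        have h2 : ν c + t ≤ U c := by simpa [hUdef] using (hbox c).2
        linarith
    exact fun y hy => (closure_minimal hsub hclosed) hy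
  -- (3) uniformity of the argmin/argmax clocks over the closure of R
  have hUmin : ∀ y ∈ closure R, ∀ c, U cs - y cs ≤ U c - y c := by
    have hclosed : IsClosed {y : T.C → ℝ | ∀ c, U cs - y cs ≤ U c - y c} := by
      have : {y : T.C → ℝ | ∀ c, U cs - y cs ≤ U c - y c} =
          ⋂ (c : T.C), {y : T.C → ℝ | U cs - y cs ≤ U c - y c} := by
        ext y; simp only [Set.mem_setOf_eq, Set.mem_iInter]
      rw [this]
      exact isClosed_iInter fun c => isClosed_le (continuous_const.sub (continuous_apply cs))
        (continuous_const.sub (continuous_apply c))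
    have hsub : R ⊆ {y : T.C → ℝ | ∀ c, U cs - y cs ≤ U c - y c} := by
      intro ν hν c
      set d : ℤ := ⌈p c⌉ - ⌈p cs⌉ with hd
      have hdr : (d : ℝ) = U c - U cs := by rw [hd, hUdef]; push_cast; ring
      have hd1 : -(T.k : ℤ) ≤ d := by
        have e1 : (0:ℝ) ≤ U c := hU0 c
        have e2 : U cs ≤ (T.k:ℝ) := hUk cs
        have : -(T.k : ℝ) ≤ (d : ℝ) := by rw [hdr]; linarith
        exact_mod_cast this
      have hd2 : d ≤ (T.k : ℤ) := by
        have e1 : U c ≤ (T.k:ℝ) := hUk c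
        have e2 : (0:ℝ) ≤ U cs := hU0 cs
        have : (d : ℝ) ≤ (T.k : ℝ) := by rw [hdr]; linarith
        exact_mod_cast this
      have hre : RegEq T.k ν₁ ν := aux_regEq_of_mem hR hν₁ hν
      have h1 : ν₁ c - ν₁ cs ≤ (d : ℝ) := by rw [hdr]; linarith [hcs c]
      have h2 : ν c - ν cs ≤ (d : ℝ) := (aux_regEq_diff_le_int hre d hd1 hd2 c cs).1 h1
      rw [hdr] at h2; linarith
    exact fun y hy => (closure_minimal hsub hclosed) hy
  have hLmax : ∀ y ∈ closure R, ∀ c, L c - y c ≤ L ci - y ci := by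
    have hclosed : IsClosed {y : T.C → ℝ | ∀ c, L c - y c ≤ L ci - y ci} := by
      have : {y : T.C → ℝ | ∀ c, L c - y c ≤ L ci - y ci} =
          ⋂ (c : T.C), {y : T.C → ℝ | L c - y c ≤ L ci - y ci} := by
        ext y; simp only [Set.mem_setOf_eq, Set.mem_iInter]
      rw [this]
      exact isClosed_iInter fun c => isClosed_le (continuous_const.sub (continuous_apply c))
        (continuous_const.sub (continuous_apply ci))
    have hsub : R ⊆ {y : T.C → ℝ | ∀ c, L c - y c ≤ L ci - y ci} := by
      intro ν hν c
      set d : ℤ := ⌊p ci⌋ - ⌊p c⌋ with hd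
      have hdr : (d : ℝ) = L ci - L c := by rw [hd, hLdef]; push_cast; ring
      have hd1 : -(T.k : ℤ) ≤ d := by
        have e1 : (0:ℝ) ≤ L ci := hL0 ci
        have e2 : L c ≤ (T.k:ℝ) := hLk c
        have : -(T.k : ℝ) ≤ (d : ℝ) := by rw [hdr]; linarith
        exact_mod_cast this
      have hd2 : d ≤ (T.k : ℤ) := by
        have e1 : L ci ≤ (T.k:ℝ) := hLk ci
        have e2 : (0:ℝ) ≤ L c := hL0 c
        have : (d : ℝ) ≤ (T.k : ℝ) := by rw [hdr]; linarith
        exact_mod_cast this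
      have hre : RegEq T.k ν₁ ν := aux_regEq_of_mem hR hν₁ hν
      have h1 : ν₁ ci - ν₁ c ≤ (d : ℝ) := by rw [hdr]; linarith [hci c]
      have h2 : ν ci - ν c ≤ (d : ℝ) := (aux_regEq_diff_le_int hre d hd1 hd2 ci c).1 h1
      rw [hdr] at h2; linarith
    exact fun y hy => (closure_minimal hsub hclosed) hy
  -- (4) conclusion
  refine ⟨L ci, U cs, ci, cs, hL0 ci, hLk ci, hU0 cs, hUk cs, ?_⟩
  intro y hy
  set S : Set ℝ := {t : ℝ | 0 ≤ t ∧ (fun c => y c + t) ∈ closure P} with hSdef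
  have hSeq : S = Set.Icc (max 0 (L ci - y ci)) (U cs - y cs) := by
    ext t
    constructor
    · rintro ⟨ht0, htm⟩
      have hbox := aux_clos_subset_box hP hp _ htm
      have h1 : L ci ≤ y ci + t := by simpa [hLdef] using (hbox ci).1
      have h2 : y cs + t ≤ U cs := by simpa [hUdef] using (hbox cs).2
      exact ⟨max_le ht0 (by linarith), by linarith⟩
    · rintro ⟨h1, h2⟩
      have ht0 : 0 ≤ t := le_trans (le_max_left _ _) h1
      have hboxall : ∀ c, (⌊p c⌋ : ℝ) ≤ y c + t ∧ y c + t ≤ (⌈p c⌉ : ℝ) := by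
        intro c
        constructor
        · have e1 : L c - y c ≤ L ci - y ci := hLmax y hy c
          have e2 : L ci - y ci ≤ max 0 (L ci - y ci) := le_max_right _ _
          have : L c ≤ y c + t := by linarith
          simpa [hLdef] using this
        · have e1 : U cs - y cs ≤ U c - y c := hUmin y hy c
          have : y c + t ≤ U c := by linarith
          simpa [hUdef] using this
      have hdy := aux_diffOK_shift t (hdiffall y hy)
      exact ⟨ht0, aux_mem_closure_of_box hP hp hboxall hdy⟩
  have hne : max 0 (L ci - y ci) ≤ U cs - y cs := by
    refine max_le ((hbounds y hy).2 cs) ?_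
    have := (hbounds y hy).1 ci cs
    linarith
  have hsup0 : 0 ≤ U cs - y cs := (hbounds y hy).2 cs
  refine ⟨?_, ?_, ?_, ?_⟩
  · rw [hSdef] at hSeq ⊢
    rw [hSeq, csInf_Icc hne]
  · rw [hSdef] at hSeq ⊢
    rw [hSeq, csSup_Icc hne, max_eq_right hsup0]
  · rw [hSdef] at hSeq ⊢
    rw [hSeq, csInf_Icc hne]
    exact ⟨le_refl _, hne⟩
  · rw [hSdef] at hSeq ⊢
    rw [hSeq, csSup_Icc hne]
    exact ⟨hne, le_refl _⟩

end TimedGame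
namespace Arena

variable {Conf Move : Type} {G : Arena Conf Move}

theorem aux_extend_last (r : G.FinRun) (mv : Move) (q' : Conf) (h : G.Tr r.last mv q') :
    (r.extend mv q' h).last = q' := by
  simp [FinRun.last, FinRun.extend, Fin.snoc_last]

theorem aux_extend_q0 (r : G.FinRun) (mv : Move) (q' : Conf) (h : G.Tr r.last mv q') :
    (r.extend mv q' h).q 0 = r.q 0 := by
  have e : (0 : Fin (r.n + 1 + 1)) = Fin.castSucc (0 : Fin (r.n + 1)) := by
    simp
  simp only [FinRun.extend, e, Fin.snoc_castSucc]
  exact (congrArg (Fin.snoc (α := fun _ => Conf) r.q q') e).trans (Fin.snoc_castSucc (α := fun _ => Conf) q' r.q 0)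

theorem aux_extend_time (r : G.FinRun) (mv : Move) (q' : Conf) (h : G.Tr r.last mv q') :
    (r.extend mv q' h).time = r.time + G.cost r.last mv := by
  simp only [FinRun.time, FinRun.extend, FinRun.last]
  erw [Fin.sum_univ_castSucc]
  congr 1
  · exact Finset.sum_congr rfl fun j _ => by rw [Fin.snoc_castSucc, Fin.snoc_castSucc]
  · rw [Fin.snoc_last, Fin.snoc_castSucc]

/-- The move taken at step `n` of the play. -/
def aux_mv (G : Arena Conf Move) (μ : G.MinStrategy) (χ : G.MaxStrategy) (q0 : Conf) (n : ℕ) :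
    Move :=
  if G.IsMin (G.play μ χ q0 n).last then μ.1 (G.play μ χ q0 n) else χ.1 (G.play μ χ q0 n)

theorem aux_play_succ (μ : G.MinStrategy) (χ : G.MaxStrategy) (q0 : Conf) (n : ℕ) :
    ∃ (q' : Conf) (h : G.Tr (G.play μ χ q0 n).last (G.aux_mv μ χ q0 n) q'),
      G.play μ χ q0 (n + 1) = (G.play μ χ q0 n).extend (G.aux_mv μ χ q0 n) q' h := by
  by_cases hmin : G.IsMin (G.play μ χ q0 n).last
  · have hmv : G.aux_mv μ χ q0 n = μ.1 (G.play μ χ q0 n) := if_pos hmin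
    rw [hmv]
    refine ⟨Classical.choose (μ.2 (G.play μ χ q0 n) hmin),
      Classical.choose_spec (μ.2 (G.play μ χ q0 n) hmin), ?_⟩
    rw [play]; simp only [hmin, dif_pos]
  · have hmv : G.aux_mv μ χ q0 n = χ.1 (G.play μ χ q0 n) := if_neg hmin
    rw [hmv]
    refine ⟨Classical.choose (χ.2 (G.play μ χ q0 n) hmin),
      Classical.choose_spec (χ.2 (G.play μ χ q0 n) hmin), ?_⟩
    rw [play]; simp only [hmin, dif_neg, not_false_iff]

theorem aux_play_tr (μ : G.MinStrategy) (χ : G.MaxStrategy) (q0 : Conf) (n : ℕ) :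
    G.Tr (G.play μ χ q0 n).last (G.aux_mv μ χ q0 n) ((G.play μ χ q0 (n + 1)).last) := by
  obtain ⟨q', h, e⟩ := aux_play_succ μ χ q0 n
  rw [e, aux_extend_last]
  exact h

theorem aux_play_n (μ : G.MinStrategy) (χ : G.MaxStrategy) (q0 : Conf) :
    ∀ n, (G.play μ χ q0 n).n = n := by
  intro n
  induction n with
  | zero => rfl
  | succ n ih =>
    obtain ⟨q', h, e⟩ := aux_play_succ μ χ q0 n
    rw [e]
    show (G.play μ χ q0 n).n + 1 = n + 1
    rw [ih]

theorem aux_play_q0 (μ : G.MinStrategy) (χ : G.MaxStrategy) (q0 : Conf) :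
    ∀ n, (G.play μ χ q0 n).q 0 = q0 := by
  intro n
  induction n with
  | zero => rfl
  | succ n ih =>
    obtain ⟨q', h, e⟩ := aux_play_succ μ χ q0 n
    rw [e, aux_extend_q0]
    exact ih

theorem aux_play_time_succ (μ : G.MinStrategy) (χ : G.MaxStrategy) (q0 : Conf) (n : ℕ) :
    (G.play μ χ q0 (n + 1)).time =
      (G.play μ χ q0 n).time + G.cost (G.play μ χ q0 n).last (G.aux_mv μ χ q0 n) := by
  obtain ⟨q', h, e⟩ := aux_play_succ μ χ q0 n
  rw [e, aux_extend_time]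

theorem aux_play_time_zero (μ : G.MinStrategy) (χ : G.MaxStrategy) (q0 : Conf) :
    (G.play μ χ q0 0).time = 0 := by
  simp [FinRun.time, single, play]
  exact Fin.sum_univ_zero _

end Arena
theorem aux_nonempty_of_mem_closure {X : Type*} [TopologicalSpace X] {A : Set X} {x : X}
    (h : x ∈ closure A) : A.Nonempty := by
  by_contra h2
  rw [Set.not_nonempty_iff_eq_empty] at h2
  rw [h2, closure_empty] at h
  exact h

namespace TimedGame

variable {T : TimedGame}

theorem aux_sameType_n {r r' : T.PreRunF} (h : T.sameType r r') : r.n = r'.n := by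
  have h1 := congrFun h.1 r.n
  have h2 := congrFun h.1 r'.n
  simp only [typeConfs] at h1 h2
  by_contra hne
  rcases Nat.lt_or_ge r.n r'.n with hlt | hge
  · rw [dif_neg (by omega), dif_pos (by omega)] at h2
    simp at h2
  · have hlt : r'.n < r.n := by omega
    rw [dif_pos (by omega), dif_neg (by omega)] at h1
    simp at h1

theorem aux_sameType_last {r r' : T.PreRunF} (h : T.sameType r r') :
    (Arena.FinRun.last r).2 = (Arena.FinRun.last r').2 := by
  have hn := aux_sameType_n h
  have h1 := congrFun h.1 r.n
  simp only [typeConfs] at h1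
  rw [dif_pos (by omega), dif_pos (by omega : r.n < r'.n + 1)] at h1
  have h2 := Option.some.inj h1
  unfold Arena.FinRun.last
  have e1 : (Fin.last r.n) = (⟨r.n, by omega⟩ : Fin (r.n + 1)) := rfl
  have e2 : (Fin.last r'.n) = (⟨r.n, by omega⟩ : Fin (r'.n + 1)) := by
    rw [Fin.ext_iff]; simp [hn]
  rw [e1, e2]
  exact h2

theorem aux_sameType_extend {r r' : T.PreRunF} (h : T.sameType r r')
    {m m' : T.RMove} {s s' : T.Omega}
    {h1 : T.preTrans (Arena.FinRun.last r) m s} {h2 : T.preTrans (Arena.FinRun.last r') m' s'}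
    (hm : m.2 = m'.2) (hs : s.2 = s'.2) :
    T.sameType (r.extend m s h1) (r'.extend m' s' h2) := by
  have hn := aux_sameType_n h
  constructor
  · funext i
    simp only [typeConfs, Arena.FinRun.extend]
    by_cases hi : i < r.n + 1 + 1
    · have hi' : i < r'.n + 1 + 1 := by omega
      erw [dif_pos hi, dif_pos hi']
      by_cases hlt : i < r.n + 1
      · have hlt' : i < r'.n + 1 := by omega
        have e1 : (⟨i, hi⟩ : Fin (r.n + 1 + 1)) = Fin.castSucc ⟨i, hlt⟩ := rfl
        have e2 : (⟨i, hi'⟩ : Fin (r'.n + 1 + 1)) = Fin.castSucc ⟨i, hlt'⟩ := rfl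
        rw [e1, e2, Fin.snoc_castSucc, Fin.snoc_castSucc]
        have h3 := congrFun h.1 i
        simp only [typeConfs] at h3
        rw [dif_pos hlt, dif_pos hlt'] at h3
        exact h3
      · have hieq : i = r.n + 1 := by omega
        have e1 : (⟨i, hi⟩ : Fin (r.n + 1 + 1)) = Fin.last (r.n + 1) := by
          rw [Fin.ext_iff]; simp [Fin.last, hieq]
        have e2 : (⟨i, hi'⟩ : Fin (r'.n + 1 + 1)) = Fin.last (r'.n + 1) := by
          rw [Fin.ext_iff]; simp [Fin.last]; omega
        rw [e1, e2, Fin.snoc_last, Fin.snoc_last, hs]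
    · have hi' : ¬ (i < r'.n + 1 + 1) := by omega
      erw [dif_neg hi, dif_neg hi']
  · funext i
    simp only [typeMoves, Arena.FinRun.extend]
    by_cases hi : i < r.n + 1
    · have hi' : i < r'.n + 1 := by omega
      erw [dif_pos hi, dif_pos hi']
      by_cases hlt : i < r.n
      · have hlt' : i < r'.n := by omega
        have e1 : (⟨i, hi⟩ : Fin (r.n + 1)) = Fin.castSucc ⟨i, hlt⟩ := rfl
        have e2 : (⟨i, hi'⟩ : Fin (r'.n + 1)) = Fin.castSucc ⟨i, hlt'⟩ := rfl
        rw [e1, e2, Fin.snoc_castSucc, Fin.snoc_castSucc]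
        have h3 := congrFun h.2 i
        simp only [typeMoves] at h3
        rw [dif_pos hlt, dif_pos hlt'] at h3
        exact h3
      · have hieq : i = r.n := by omega
        have e1 : (⟨i, hi⟩ : Fin (r.n + 1)) = Fin.last r.n := by
          rw [Fin.ext_iff]; simp [Fin.last, hieq]
        have e2 : (⟨i, hi'⟩ : Fin (r'.n + 1)) = Fin.last r'.n := by
          rw [Fin.ext_iff]; simp [Fin.last]; omega
        rw [e1, e2, Fin.snoc_last, Fin.snoc_last, hm]
    · have hi' : ¬ (i < r'.n + 1) := by omega
      erw [dif_neg hi, dif_neg hi']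

/-- The successor region in `regAct` is uniquely determined. -/
theorem aux_regAct_unique {P : T.Region} {a : T.A} {R1 R2 : T.Region}
    (h1 : T.regAct P a R1) (h2 : T.regAct P a R2) : R1 = R2 := by
  obtain ⟨ν₁, hν₁, w₁, hw₁, hstep₁⟩ := h1
  obtain ⟨ν₂, hν₂, w₂, hw₂, hstep₂⟩ := h2
  have e₁ := hstep₁.2.2.2
  have e₂ := hstep₂.2.2.2
  rw [Prod.ext_iff] at e₁ e₂
  have hv₁ : IsVal T.k ν₁ := aux_isVal_of_mem P.2.2 hν₁
  have hv₂ : IsVal T.k ν₂ := aux_isVal_of_mem P.2.2 hν₂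
  have hre : RegEq T.k ν₁ ν₂ := aux_regEq_of_mem P.2.2 hν₁ hν₂
  have hrw : RegEq T.k w₁ w₂ := by
    have := aux_regEq_reset (T.ϱ a) hv₁ hv₂ hre
    rw [show w₁ = T.resetv ν₁ (T.ϱ a) from e₁.2, show w₂ = T.resetv ν₂ (T.ϱ a) from e₂.2]
    exact this
  have hloc : R1.1 = R2.1 := by
    rw [show R1.1 = T.δ P.1 a from e₁.1, show R2.1 = T.δ P.1 a from e₂.1]
  have hreg : R1.2 = R2.2 := Subtype.ext (aux_region_unique R1.2.2 R2.2.2 hw₁ hw₂ hrw)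
  exact Prod.ext hloc hreg

/-- Resetting maps the closure of the intermediate region into the closure of
the successor region. -/
theorem aux_reset_mem_closure {P : T.Region} {a : T.A} {R' : T.Region}
    (hact : T.regAct P a R') {w : T.C → ℝ} (hw : w ∈ closure P.2.1) :
    T.resetv w (T.ϱ a) ∈ closure R'.2.1 := by
  obtain ⟨ν₁, hν₁, w₁, hw₁, hstep₁⟩ := hact
  have e₁ := hstep₁.2.2.2
  rw [Prod.ext_iff] at e₁
  have hcont : Continuous (fun ν : T.C → ℝ => T.resetv ν (T.ϱ a)) := by
    refine continuous_pi fun c => ?_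
    unfold resetv
    by_cases hc : c ∈ T.ϱ a
    · simp only [hc, if_pos, if_true]; exact continuous_const
    · simp only [hc, if_neg, if_false]; exact continuous_apply c
  have himg : (fun ν : T.C → ℝ => T.resetv ν (T.ϱ a)) '' P.2.1 ⊆ R'.2.1 := by
    rintro _ ⟨ν, hν, rfl⟩
    have hv : IsVal T.k ν := aux_isVal_of_mem P.2.2 hν
    have hv₁ : IsVal T.k ν₁ := aux_isVal_of_mem P.2.2 hν₁
    have hre : RegEq T.k ν₁ ν := aux_regEq_of_mem P.2.2 hν₁ hν
    have hrw : RegEq T.k w₁ (T.resetv ν (T.ϱ a)) := by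
      have := aux_regEq_reset (T.ϱ a) hv₁ hv hre
      rw [show w₁ = T.resetv ν₁ (T.ϱ a) from e₁.2]
      exact this
    exact aux_mem_region_of_regEq R'.2.2 hw₁ (aux_isVal_reset _ hv) hrw
  have : T.resetv w (T.ϱ a) ∈ (fun ν : T.C → ℝ => T.resetv ν (T.ϱ a)) '' closure P.2.1 :=
    ⟨w, hw, rfl⟩
  have h2 := image_closure_subset_closure_image hcont this
  exact closure_mono himg h2
end TimedGame
section LimsupAux

open Filter

theorem aux_limsup_le {u v : ℕ → ℝ} (K : ℝ)
    (hu0 : ∀ n, 0 ≤ u n) (hvK : ∀ n, v n ≤ K)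
    (hclose : ∀ ε : ℝ, 0 < ε → ∀ᶠ n in atTop, u n - v n ≤ ε) :
    limsup u atTop ≤ limsup v atTop := by
  have hcu : IsCoboundedUnder (· ≤ ·) atTop u :=
    (isBoundedUnder_of ⟨(0:ℝ), fun n => hu0 n⟩ :
      IsBoundedUnder (· ≥ ·) atTop u).isCoboundedUnder_le
  have hbv : IsBoundedUnder (· ≤ ·) atTop v := isBoundedUnder_of ⟨K, hvK⟩
  refine le_of_forall_pos_le_add fun ε hε => ?_
  have h1 : ∀ᶠ n in atTop, v n < limsup v atTop + ε / 2 :=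
    eventually_lt_of_limsup_lt (by linarith) hbv
  have h2 := hclose (ε / 2) (by linarith)
  refine limsup_le_of_le hcu ?_
  filter_upwards [h1, h2] with n hn1 hn2
  linarith

theorem aux_liminf_le {u v : ℕ → ℝ} (K : ℝ)
    (hu0 : ∀ n, 0 ≤ u n) (hvK : ∀ n, v n ≤ K)
    (hclose : ∀ ε : ℝ, 0 < ε → ∀ᶠ n in atTop, u n - v n ≤ ε) :
    liminf u atTop ≤ liminf v atTop := by
  have hbu : IsBoundedUnder (· ≥ ·) atTop u := isBoundedUnder_of ⟨(0:ℝ), fun n => hu0 n⟩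
  have hcv : IsCoboundedUnder (· ≥ ·) atTop v :=
    (isBoundedUnder_of ⟨K, hvK⟩ : IsBoundedUnder (· ≤ ·) atTop v).isCoboundedUnder_ge
  refine le_of_forall_pos_le_add fun ε hε => ?_
  have h1 : ∀ᶠ n in atTop, liminf u atTop - ε / 2 < u n :=
    eventually_lt_of_lt_liminf (by linarith) hbu
  have h2 := hclose (ε / 2) (by linarith)
  have h3 : liminf u atTop - ε ≤ liminf v atTop := by
    refine le_liminf_of_le hcv ?_
    filter_upwards [h1, h2] with n hn1 hn2
    linarith
  linarith

theorem aux_avg_eq (f g : ℕ → ℝ) (K B : ℝ)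
    (hf0 : ∀ n, 0 ≤ f n) (hfK : ∀ n, f n ≤ K * n)
    (hg0 : ∀ n, 0 ≤ g n) (hgK : ∀ n, g n ≤ K * n)
    (hfg : ∀ n, |f n - g n| ≤ B) :
    limsup (fun n => f n / n) atTop = limsup (fun n => g n / n) atTop ∧
    liminf (fun n => f n / n) atTop = liminf (fun n => g n / n) atTop := by
  set u : ℕ → ℝ := fun n => f n / n with hu
  set v : ℕ → ℝ := fun n => g n / n with hv
  have hu0 : ∀ n, 0 ≤ u n := fun n => div_nonneg (hf0 n) (Nat.cast_nonneg n)
  have hv0 : ∀ n, 0 ≤ v n := fun n => div_nonneg (hg0 n) (Nat.cast_nonneg n)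
  have huK : ∀ n, u n ≤ max K 0 := by
    intro n
    rcases Nat.eq_zero_or_pos n with rfl | hn
    · simp [hu]
    · have hnpos : (0:ℝ) < n := by exact_mod_cast hn
      have : u n ≤ K := by
        rw [hu, div_le_iff₀ hnpos]
        exact hfK n
      exact le_trans this (le_max_left _ _)
  have hvK : ∀ n, v n ≤ max K 0 := by
    intro n
    rcases Nat.eq_zero_or_pos n with rfl | hn
    · simp [hv]
    · have hnpos : (0:ℝ) < n := by exact_mod_cast hn
      have : v n ≤ K := by
        rw [hv, div_le_iff₀ hnpos]
        exact hgK n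
      exact le_trans this (le_max_left _ _)
  have hclose : ∀ ε : ℝ, 0 < ε → ∀ᶠ n in atTop, |u n - v n| ≤ ε := by
    intro ε hε
    rw [eventually_atTop]
    refine ⟨⌈B / ε⌉₊ + 1, fun n hn => ?_⟩
    have hn1 : 1 ≤ n := le_trans (Nat.le_add_left 1 _) hn
    have hnpos : (0:ℝ) < n := by exact_mod_cast hn1
    have e1 : u n - v n = (f n - g n) / n := by rw [hu, hv]; ring
    rw [e1, abs_div, abs_of_pos hnpos, div_le_iff₀ hnpos]
    have h2 : B / ε < n := by
      have := Nat.le_ceil (B / ε)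
      have h3 : (⌈B / ε⌉₊ : ℝ) + 1 ≤ (n : ℝ) := by exact_mod_cast hn
      linarith
    have h4 : B ≤ ε * n := by
      rcases le_or_gt B 0 with hB | hB
      · nlinarith
      · rw [div_lt_iff₀ hε] at h2
        nlinarith
    exact le_trans (hfg n) h4
  have hc1 : ∀ ε : ℝ, 0 < ε → ∀ᶠ n in atTop, u n - v n ≤ ε := by
    intro ε hε
    filter_upwards [hclose ε hε] with n hn
    have := abs_le.1 hn
    linarith [this.2]
  have hc2 : ∀ ε : ℝ, 0 < ε → ∀ᶠ n in atTop, v n - u n ≤ ε := by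
    intro ε hε
    filter_upwards [hclose ε hε] with n hn
    have := abs_le.1 hn
    linarith [this.1]
  exact ⟨le_antisymm (aux_limsup_le (max K 0) hu0 hvK hc1)
      (aux_limsup_le (max K 0) hv0 huK hc2),
    le_antisymm (aux_liminf_le (max K 0) hu0 hvK hc1)
      (aux_liminf_le (max K 0) hv0 huK hc2)⟩

end LimsupAux
namespace TimedGame

variable {T : TimedGame}

theorem aux_sameType_single {q₁ q₂ : T.Omega} (hreg : q₁.2 = q₂.2) :
    T.sameType (T.preArena.single q₁) (T.preArena.single q₂) := by
  constructor
  · funext i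
    simp only [typeConfs, Arena.single]
    by_cases hi : i < 0 + 1
    · erw [dif_pos hi, dif_pos hi]
      simp [hreg]
    · erw [dif_neg hi, dif_neg hi]
  · funext i
    simp [typeMoves, Arena.single]

theorem aux_sim (hC : Nonempty T.C)
    (μ₁ μ₂ : T.MinPre) (χ₁ χ₂ : T.MaxPre)
    (hbμ₁ : T.MinBoundary μ₁) (hbμ₂ : T.MinBoundary μ₂)
    (hbχ₁ : T.MaxBoundary χ₁) (hbχ₂ : T.MaxBoundary χ₂)
    (q₁ q₂ : T.Omega) (hq₁ : T.barS q₁) (hq₂ : T.barS q₂) (hreg : q₁.2 = q₂.2)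
    (hcMin : ∀ n, T.sameType (T.preArena.play μ₁ χ₁ q₁ n) (T.preArena.play μ₂ χ₂ q₂ n) →
      T.barS (Arena.FinRun.last (T.preArena.play μ₁ χ₁ q₁ n)) →
      T.barS (Arena.FinRun.last (T.preArena.play μ₂ χ₂ q₂ n)) →
      (Arena.FinRun.last (T.preArena.play μ₁ χ₁ q₁ n)).2.1 ∈ T.LMin →
      (μ₁.1 (T.preArena.play μ₁ χ₁ q₁ n)).2 = (μ₂.1 (T.preArena.play μ₂ χ₂ q₂ n)).2)
    (hcMax : ∀ n, T.sameType (T.preArena.play μ₁ χ₁ q₁ n) (T.preArena.play μ₂ χ₂ q₂ n) →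
      T.barS (Arena.FinRun.last (T.preArena.play μ₁ χ₁ q₁ n)) →
      T.barS (Arena.FinRun.last (T.preArena.play μ₂ χ₂ q₂ n)) →
      (Arena.FinRun.last (T.preArena.play μ₁ χ₁ q₁ n)).2.1 ∉ T.LMin →
      (χ₁.1 (T.preArena.play μ₁ χ₁ q₁ n)).2 = (χ₂.1 (T.preArena.play μ₂ χ₂ q₂ n)).2) :
    ∀ n : ℕ,
      T.sameType (T.preArena.play μ₁ χ₁ q₁ n) (T.preArena.play μ₂ χ₂ q₂ n) ∧
      T.barS (Arena.FinRun.last (T.preArena.play μ₁ χ₁ q₁ n)) ∧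
      T.barS (Arena.FinRun.last (T.preArena.play μ₂ χ₂ q₂ n)) ∧
      (0 ≤ (T.preArena.play μ₁ χ₁ q₁ n).time ∧
        (T.preArena.play μ₁ χ₁ q₁ n).time ≤ (T.k : ℝ) * n) ∧
      (0 ≤ (T.preArena.play μ₂ χ₂ q₂ n).time ∧
        (T.preArena.play μ₂ χ₂ q₂ n).time ≤ (T.k : ℝ) * n) ∧
      |(T.preArena.play μ₁ χ₁ q₁ n).time - (T.preArena.play μ₂ χ₂ q₂ n).time| ≤ (T.k : ℝ) ∧
      ∀ c : T.C,
        |(Arena.FinRun.last (T.preArena.play μ₁ χ₁ q₁ n)).1.2 c -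
          (Arena.FinRun.last (T.preArena.play μ₂ χ₂ q₂ n)).1.2 c -
          ((T.preArena.play μ₁ χ₁ q₁ n).time - (T.preArena.play μ₂ χ₂ q₂ n).time)| ≤ (T.k : ℝ) := by
  set G := T.preArena with hG
  intro n
  induction n with
  | zero =>
    have e₁ : G.play μ₁ χ₁ q₁ 0 = G.single q₁ := rfl
    have e₂ : G.play μ₂ χ₂ q₂ 0 = G.single q₂ := rfl
    have el₁ : Arena.FinRun.last (G.single q₁) = q₁ := rfl
    have el₂ : Arena.FinRun.last (G.single q₂) = q₂ := rfl
    have ht₁ : (G.play μ₁ χ₁ q₁ 0).time = 0 := Arena.aux_play_time_zero μ₁ χ₁ q₁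
    have ht₂ : (G.play μ₂ χ₂ q₂ 0).time = 0 := Arena.aux_play_time_zero μ₂ χ₂ q₂
    rw [e₁, e₂] at *
    refine ⟨aux_sameType_single hreg, el₁ ▸ hq₁, el₂ ▸ hq₂, ?_, ?_, ?_, ?_⟩
    · rw [ht₁]; norm_num
    · rw [ht₂]; norm_num
    · rw [ht₁, ht₂]; simp
    · intro c
      rw [ht₁, ht₂, el₁, el₂]
      have hx₁ : IsVal T.k q₁.1.2 := aux_isVal_of_mem_closure q₁.2.2.2 hq₁.2
      have hx₂ : IsVal T.k q₂.1.2 := aux_isVal_of_mem_closure q₂.2.2.2 hq₂.2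
      have h1 := (hx₁ c).1; have h2 := (hx₁ c).2
      have h3 := (hx₂ c).1; have h4 := (hx₂ c).2
      rw [abs_le]; constructor <;> linarith
  | succ n ih =>
    obtain ⟨hst, hbar₁, hbar₂, ⟨htm₁0, htm₁k⟩, ⟨htm₂0, htm₂k⟩, hD, hE⟩ := ih
    set r₁ := G.play μ₁ χ₁ q₁ n with hr₁
    set r₂ := G.play μ₂ χ₂ q₂ n with hr₂
    set s₁ := Arena.FinRun.last r₁ with hs₁
    set s₂ := Arena.FinRun.last r₂ with hs₂
    obtain ⟨s₁', htr₁, e₁⟩ := Arena.aux_play_succ μ₁ χ₁ q₁ n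
    obtain ⟨s₂', htr₂, e₂⟩ := Arena.aux_play_succ μ₂ χ₂ q₂ n
    set m₁ := G.aux_mv μ₁ χ₁ q₁ n with hm₁def
    set m₂ := G.aux_mv μ₂ χ₂ q₂ n with hm₂def
    have hlastreg : s₁.2 = s₂.2 := aux_sameType_last hst
    -- the moves have the same region-action component, and boundary delays
    have hkcast : (0:ℝ) ≤ (T.k : ℝ) := Nat.cast_nonneg _
    have hmain : m₁.2 = m₂.2 ∧
        m₁.1 = sInf {t : ℝ | 0 ≤ t ∧ (fun c => s₁.1.2 c + t) ∈ closure m₁.2.1.2.1} ∧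
        m₂.1 = sInf {t : ℝ | 0 ≤ t ∧ (fun c => s₂.1.2 c + t) ∈ closure m₂.2.1.2.1} ∨
        m₁.2 = m₂.2 ∧
        m₁.1 = sSup {t : ℝ | 0 ≤ t ∧ (fun c => s₁.1.2 c + t) ∈ closure m₁.2.1.2.1} ∧
        m₂.1 = sSup {t : ℝ | 0 ≤ t ∧ (fun c => s₂.1.2 c + t) ∈ closure m₂.2.1.2.1} := by
      by_cases hmin : G.IsMin s₁
      · have hmin₂ : G.IsMin s₂ := by
          show s₂.2.1 ∈ T.LMin
          rw [← hlastreg]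
          exact hmin
        have e₁' : m₁ = μ₁.1 r₁ := if_pos hmin
        have e₂' : m₂ = μ₂.1 r₂ := if_pos hmin₂
        refine Or.inl ⟨?_, ?_, ?_⟩
        · rw [e₁', e₂']
          exact hcMin n hst hbar₁ hbar₂ hmin
        · rw [e₁']; exact hbμ₁ r₁
        · rw [e₂']; exact hbμ₂ r₂
      · have hmin₂ : ¬ G.IsMin s₂ := by
          show ¬ s₂.2.1 ∈ T.LMin
          rw [← hlastreg]
          exact hmin
        have e₁' : m₁ = χ₁.1 r₁ := if_neg hmin
        have e₂' : m₂ = χ₂.1 r₂ := if_neg hmin₂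
        refine Or.inr ⟨?_, ?_, ?_⟩
        · rw [e₁', e₂']
          exact hcMax n hst hbar₁ hbar₂ hmin
        · rw [e₁']; exact hbχ₁ r₁
        · rw [e₂']; exact hbχ₂ r₂
    have hmm : m₁.2 = m₂.2 := by rcases hmain with ⟨h, _, _⟩ | ⟨h, _, _⟩ <;> exact h
    -- destructure the two transitions
    have htr₁' : T.preTrans s₁ m₁ s₁' := htr₁
    have htr₂' : T.preTrans s₂ m₂ s₂' := htr₂
    obtain ⟨h01, hts1, hact1, heq1⟩ := htr₁'
    obtain ⟨h02, hts2, hact2, heq2⟩ := htr₂'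
    set P := m₁.2.1 with hPdef
    set a := m₁.2.2 with hadef
    have hm₂1 : m₂.2.1 = P := by rw [← hmm]
    have hm₂2 : m₂.2.2 = a := by rw [← hmm]
    rw [hm₂1] at hts2
    rw [hm₂1, hm₂2] at hact2
    -- the key lemma for the current region
    have hx₁ : s₁.1.2 ∈ closure s₁.2.2.1 := hbar₁.2
    have hx₂ : s₂.1.2 ∈ closure s₁.2.2.1 := by rw [hlastreg]; exact hbar₂.2
    have hRne : s₁.2.2.1.Nonempty := aux_nonempty_of_mem_closure hx₁
    obtain ⟨p, hpP, w₀, hw₀, hstep₀⟩ := hact1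
    have hts' : ∀ ν ∈ s₁.2.2.1, ∃ t : ℝ, 0 ≤ t ∧ (fun c => ν c + t) ∈ P.2.1 := by
      intro ν hν
      obtain ⟨t, ht0, _, htP⟩ := hts1.2 ν hν
      exact ⟨t, ht0, htP⟩
    obtain ⟨bi, bs, ci, cs, hbi0, hbik, hbs0, hbsk, hkey⟩ :=
      aux_key hC s₁.2.2.2 P.2.2 hRne hpP hts'
    have hkey₁ := hkey s₁.1.2 hx₁
    have hkey₂ := hkey s₂.1.2 hx₂
    -- uniform handling of the Min and Max cases
    have hdelays : ∃ (b : ℝ) (cb : T.C), 0 ≤ b ∧ b ≤ (T.k : ℝ) ∧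
        m₁.1 = max 0 (b - s₁.1.2 cb) ∧ m₂.1 = max 0 (b - s₂.1.2 cb) ∧
        (fun c => s₁.1.2 c + m₁.1) ∈ closure P.2.1 ∧
        (fun c => s₂.1.2 c + m₂.1) ∈ closure P.2.1 := by
      rcases hmain with ⟨_, hf₁, hf₂⟩ | ⟨_, hf₁, hf₂⟩
      · rw [hm₂1] at hf₂
        refine ⟨bi, ci, hbi0, hbik, ?_, ?_, ?_, ?_⟩
        · rw [hf₁]; exact hkey₁.1
        · rw [hf₂]; exact hkey₂.1
        · rw [hf₁]; exact hkey₁.2.2.1.2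
        · rw [hf₂]; exact hkey₂.2.2.1.2
      · rw [hm₂1] at hf₂
        refine ⟨bs, cs, hbs0, hbsk, ?_, ?_, ?_, ?_⟩
        · rw [hf₁]; exact hkey₁.2.1
        · rw [hf₂]; exact hkey₂.2.1
        · rw [hf₁]; exact hkey₁.2.2.2.2
        · rw [hf₂]; exact hkey₂.2.2.2.2
    obtain ⟨b, cb, hb0, hbk, hdel₁, hdel₂, hmem₁, hmem₂⟩ := hdelays
    -- bounds on the delays
    have hxv₁ : IsVal T.k s₁.1.2 := aux_isVal_of_mem_closure s₁.2.2.2 hx₁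
    have hxv₂ : IsVal T.k s₂.1.2 := aux_isVal_of_mem_closure s₁.2.2.2 hx₂
    have hdel₁0 : 0 ≤ m₁.1 := hdel₁ ▸ le_max_left _ _
    have hdel₂0 : 0 ≤ m₂.1 := hdel₂ ▸ le_max_left _ _
    have hdel₁k : m₁.1 ≤ (T.k : ℝ) := by
      rw [hdel₁]
      have := (hxv₁ cb).1
      apply max_le hkcast
      linarith
    have hdel₂k : m₂.1 ≤ (T.k : ℝ) := by
      rw [hdel₂]
      have := (hxv₂ cb).1
      apply max_le hkcast
      linarith
    -- successor regions agree
    have hact1' : T.regAct P a s₁'.2 := ⟨p, hpP, w₀, hw₀, hstep₀⟩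
    have hsreg : s₁'.2 = s₂'.2 := aux_regAct_unique hact1' hact2
    -- barS for the successors
    have hbar₁' : T.barS s₁' := by
      constructor
      · rw [heq1]
        obtain ⟨ν₁, hν₁, w₁, hw₁, hstep₁⟩ := hact1'
        have eloc := (Prod.ext_iff.1 hstep₁.2.2.2).1
        simp only at eloc
        rw [eloc]
        show T.δ s₁.1.1 a = T.δ P.1 a
        rw [hbar₁.1, hts1.1]
      · rw [heq1]
        show T.resetv (fun c => s₁.1.2 c + m₁.1) (T.ϱ a) ∈ closure s₁'.2.2.1
        exact aux_reset_mem_closure hact1' hmem₁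
    have hbar₂' : T.barS s₂' := by
      constructor
      · rw [heq2]
        obtain ⟨ν₂, hν₂, w₂, hw₂, hstep₂⟩ := hact2
        have eloc := (Prod.ext_iff.1 hstep₂.2.2.2).1
        simp only at eloc
        rw [hm₂2, eloc]
        show T.δ s₂.1.1 a = T.δ P.1 a
        rw [hbar₂.1, ← hlastreg, hts1.1]
      · rw [heq2, hm₂2]
        show T.resetv (fun c => s₂.1.2 c + m₂.1) (T.ϱ a) ∈ closure s₂'.2.2.1
        rw [← hsreg]
        exact aux_reset_mem_closure hact1' hmem₂
    -- the new plays are extensions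
    have hlast₁' : Arena.FinRun.last (G.play μ₁ χ₁ q₁ (n + 1)) = s₁' := by
      rw [e₁, Arena.aux_extend_last]
    have hlast₂' : Arena.FinRun.last (G.play μ₂ χ₂ q₂ (n + 1)) = s₂' := by
      rw [e₂, Arena.aux_extend_last]
    -- times
    have htime₁ : (G.play μ₁ χ₁ q₁ (n + 1)).time = r₁.time + m₁.1 :=
      Arena.aux_play_time_succ μ₁ χ₁ q₁ n
    have htime₂ : (G.play μ₂ χ₂ q₂ (n + 1)).time = r₂.time + m₂.1 :=
      Arena.aux_play_time_succ μ₂ χ₂ q₂ n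
    -- arithmetic for the new invariants
    rw [abs_le] at hD
    have hEcb := hE cb
    rw [abs_le] at hEcb
    have hDnew : |(r₁.time + m₁.1) - (r₂.time + m₂.1)| ≤ (T.k : ℝ) := by
      rw [abs_le]
      rcases max_choice 0 (b - s₁.1.2 cb) with hc₁ | hc₁ <;>
        rcases max_choice 0 (b - s₂.1.2 cb) with hc₂ | hc₂ <;>
        rw [hc₁] at hdel₁ <;> rw [hc₂] at hdel₂ <;>
        [skip; skip; skip; skip] <;>
      constructor <;>
      [linarith [hD.1, hD.2]; linarith [hD.1, hD.2];
       (have h5 : b - s₁.1.2 cb ≤ 0 := by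
          by_contra h6
          push_neg at h6
          have := max_eq_right (le_of_lt h6)
          rw [this] at hc₁; linarith
        linarith [hEcb.1, hEcb.2, hD.1, hD.2]);
       (have h5 : b - s₁.1.2 cb ≤ 0 := by
          by_contra h6
          push_neg at h6
          have := max_eq_right (le_of_lt h6)
          rw [this] at hc₁; linarith
        linarith [hEcb.1, hEcb.2, hD.1, hD.2]);
       (have h5 : b - s₂.1.2 cb ≤ 0 := by
          by_contra h6
          push_neg at h6
          have := max_eq_right (le_of_lt h6)
          rw [this] at hc₂; linarith
        linarith [hEcb.1, hEcb.2, hD.1, hD.2]);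
       (have h5 : b - s₂.1.2 cb ≤ 0 := by
          by_contra h6
          push_neg at h6
          have := max_eq_right (le_of_lt h6)
          rw [this] at hc₂; linarith
        linarith [hEcb.1, hEcb.2, hD.1, hD.2]);
       linarith [hEcb.1, hEcb.2]; linarith [hEcb.1, hEcb.2]]
    refine ⟨?_, hlast₁' ▸ hbar₁', hlast₂' ▸ hbar₂', ?_, ?_, ?_, ?_⟩
    · -- sameType
      rw [e₁, e₂]
      exact aux_sameType_extend hst hmm hsreg
    · rw [htime₁]
      constructor
      · linarith
      · push_cast; linarith
    · rw [htime₂]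
      constructor
      · linarith
      · push_cast; linarith
    · rw [htime₁, htime₂]
      exact hDnew
    · intro c
      rw [htime₁, htime₂, hlast₁', hlast₂', heq1, heq2, hm₂2]
      show |T.resetv (fun c' => s₁.1.2 c' + m₁.1) (T.ϱ a) c -
        T.resetv (fun c' => s₂.1.2 c' + m₂.1) (T.ϱ a) c -
        (r₁.time + m₁.1 - (r₂.time + m₂.1))| ≤ (T.k : ℝ)
      by_cases hcmem : c ∈ T.ϱ a
      · simp only [resetv, hcmem, if_pos, if_true]
        rw [show (0:ℝ) - 0 - (r₁.time + m₁.1 - (r₂.time + m₂.1)) =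
          -((r₁.time + m₁.1) - (r₂.time + m₂.1)) by ring, abs_neg]
        exact hDnew
      · simp only [resetv, hcmem, if_neg, if_false]
        have hEc := hE c
        rw [abs_le] at hEc ⊢
        constructor <;> linarith [hEc.1, hEc.2]

end TimedGame
namespace TimedGame

variable {T : TimedGame}

theorem aux_sim_payoff (hC : Nonempty T.C)
    (μ₁ μ₂ : T.MinPre) (χ₁ χ₂ : T.MaxPre)
    (hbμ₁ : T.MinBoundary μ₁) (hbμ₂ : T.MinBoundary μ₂)
    (hbχ₁ : T.MaxBoundary χ₁) (hbχ₂ : T.MaxBoundary χ₂)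
    (q₁ q₂ : T.Omega) (hq₁ : T.barS q₁) (hq₂ : T.barS q₂) (hreg : q₁.2 = q₂.2)
    (hcMin : ∀ n, T.sameType (T.preArena.play μ₁ χ₁ q₁ n) (T.preArena.play μ₂ χ₂ q₂ n) →
      T.barS (Arena.FinRun.last (T.preArena.play μ₁ χ₁ q₁ n)) →
      T.barS (Arena.FinRun.last (T.preArena.play μ₂ χ₂ q₂ n)) →
      (Arena.FinRun.last (T.preArena.play μ₁ χ₁ q₁ n)).2.1 ∈ T.LMin →
      (μ₁.1 (T.preArena.play μ₁ χ₁ q₁ n)).2 = (μ₂.1 (T.preArena.play μ₂ χ₂ q₂ n)).2)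
    (hcMax : ∀ n, T.sameType (T.preArena.play μ₁ χ₁ q₁ n) (T.preArena.play μ₂ χ₂ q₂ n) →
      T.barS (Arena.FinRun.last (T.preArena.play μ₁ χ₁ q₁ n)) →
      T.barS (Arena.FinRun.last (T.preArena.play μ₂ χ₂ q₂ n)) →
      (Arena.FinRun.last (T.preArena.play μ₁ χ₁ q₁ n)).2.1 ∉ T.LMin →
      (χ₁.1 (T.preArena.play μ₁ χ₁ q₁ n)).2 = (χ₂.1 (T.preArena.play μ₂ χ₂ q₂ n)).2) :
    Arena.AMin T.preArena q₁ μ₁ χ₁ = Arena.AMin T.preArena q₂ μ₂ χ₂ ∧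
    Arena.AMax T.preArena q₁ μ₁ χ₁ = Arena.AMax T.preArena q₂ μ₂ χ₂ := by
  have hinv := aux_sim hC μ₁ μ₂ χ₁ χ₂ hbμ₁ hbμ₂ hbχ₁ hbχ₂ q₁ q₂ hq₁ hq₂ hreg hcMin hcMax
  have h := aux_avg_eq (fun n => (T.preArena.play μ₁ χ₁ q₁ n).time)
    (fun n => (T.preArena.play μ₂ χ₂ q₂ n).time) (T.k : ℝ) (T.k : ℝ)
    (fun n => (hinv n).2.2.2.1.1) (fun n => (hinv n).2.2.2.1.2)
    (fun n => (hinv n).2.2.2.2.1.1) (fun n => (hinv n).2.2.2.2.1.2)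
    (fun n => (hinv n).2.2.2.2.2.1)
  exact ⟨h.1, h.2⟩

/-- The candidate mirror move for Max. -/
def auxCandMax (T : TimedGame) (μq : T.MinPre) (χ' : T.MaxPre) (q' : T.Omega)
    (r : T.PreRunF) : T.RMove :=
  (sSup {t : ℝ | 0 ≤ t ∧ (fun c => (Arena.FinRun.last r).1.2 c + t) ∈
      closure ((χ'.1 (T.preArena.play μq χ' q' r.n)).2.1.2.1)},
   (χ'.1 (T.preArena.play μq χ' q' r.n)).2)

/-- The mirror strategy of Max. -/
def auxPsiFun (T : TimedGame) (μq : T.MinPre) (χ' : T.MaxPre) (q' : T.Omega) (χ : T.MaxPre)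
    (r : T.PreRunF) : T.RMove :=
  if _ : ∃ s', T.preTrans (Arena.FinRun.last r) (T.auxCandMax μq χ' q' r) s' then
    T.auxCandMax μq χ' q' r
  else χ.1 r

def auxPsi (T : TimedGame) (μq : T.MinPre) (χ' : T.MaxPre) (q' : T.Omega) (χ : T.MaxPre) :
    T.MaxPre := by
  refine ⟨T.auxPsiFun μq χ' q' χ, fun r hr => ?_⟩
  unfold auxPsiFun
  by_cases h : ∃ s', T.preTrans (Arena.FinRun.last r) (T.auxCandMax μq χ' q' r) s'
  · rw [dif_pos h]; exact h
  · rw [dif_neg h]; exact χ.2 r hr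

theorem auxPsi_eval_pos (μq : T.MinPre) (χ' : T.MaxPre) (q' : T.Omega) (χ : T.MaxPre)
    (r : T.PreRunF) (h : ∃ s', T.preTrans (Arena.FinRun.last r) (T.auxCandMax μq χ' q' r) s') :
    (T.auxPsi μq χ' q' χ).1 r = T.auxCandMax μq χ' q' r := by
  show T.auxPsiFun μq χ' q' χ r = _
  unfold auxPsiFun
  exact dif_pos h

theorem auxPsi_eval_neg (μq : T.MinPre) (χ' : T.MaxPre) (q' : T.Omega) (χ : T.MaxPre)
    (r : T.PreRunF) (h : ¬ ∃ s', T.preTrans (Arena.FinRun.last r) (T.auxCandMax μq χ' q' r) s') :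
    (T.auxPsi μq χ' q' χ).1 r = χ.1 r := by
  show T.auxPsiFun μq χ' q' χ r = _
  unfold auxPsiFun
  exact dif_neg h

theorem auxPsi_boundary (μq : T.MinPre) (χ' : T.MaxPre) (q' : T.Omega) (χ : T.MaxPre)
    (hχ : T.MaxBoundary χ) : T.MaxBoundary (T.auxPsi μq χ' q' χ) := by
  intro r
  by_cases h : ∃ s', T.preTrans (Arena.FinRun.last r) (T.auxCandMax μq χ' q' r) s'
  · rw [auxPsi_eval_pos μq χ' q' χ r h]
    rfl
  · rw [auxPsi_eval_neg μq χ' q' χ r h]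
    exact hχ r

/-- The candidate mirror move for Min. -/
def auxCandMin (T : TimedGame) (μ' : T.MinPre) (χq : T.MaxPre) (q' : T.Omega)
    (r : T.PreRunF) : T.RMove :=
  (sInf {t : ℝ | 0 ≤ t ∧ (fun c => (Arena.FinRun.last r).1.2 c + t) ∈
      closure ((μ'.1 (T.preArena.play μ' χq q' r.n)).2.1.2.1)},
   (μ'.1 (T.preArena.play μ' χq q' r.n)).2)

def auxPhiFun (T : TimedGame) (μ' : T.MinPre) (χq : T.MaxPre) (q' : T.Omega) (μ : T.MinPre)
    (r : T.PreRunF) : T.RMove :=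
  if _ : ∃ s', T.preTrans (Arena.FinRun.last r) (T.auxCandMin μ' χq q' r) s' then
    T.auxCandMin μ' χq q' r
  else μ.1 r

def auxPhi (T : TimedGame) (μ' : T.MinPre) (χq : T.MaxPre) (q' : T.Omega) (μ : T.MinPre) :
    T.MinPre := by
  refine ⟨T.auxPhiFun μ' χq q' μ, fun r hr => ?_⟩
  unfold auxPhiFun
  by_cases h : ∃ s', T.preTrans (Arena.FinRun.last r) (T.auxCandMin μ' χq q' r) s'
  · rw [dif_pos h]; exact h
  · rw [dif_neg h]; exact μ.2 r hr

theorem auxPhi_eval_pos (μ' : T.MinPre) (χq : T.MaxPre) (q' : T.Omega) (μ : T.MinPre)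
    (r : T.PreRunF) (h : ∃ s', T.preTrans (Arena.FinRun.last r) (T.auxCandMin μ' χq q' r) s') :
    (T.auxPhi μ' χq q' μ).1 r = T.auxCandMin μ' χq q' r := by
  show T.auxPhiFun μ' χq q' μ r = _
  unfold auxPhiFun
  exact dif_pos h

theorem auxPhi_eval_neg (μ' : T.MinPre) (χq : T.MaxPre) (q' : T.Omega) (μ : T.MinPre)
    (r : T.PreRunF) (h : ¬ ∃ s', T.preTrans (Arena.FinRun.last r) (T.auxCandMin μ' χq q' r) s') :
    (T.auxPhi μ' χq q' μ).1 r = μ.1 r := by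
  show T.auxPhiFun μ' χq q' μ r = _
  unfold auxPhiFun
  exact dif_neg h

theorem auxPhi_boundary (μ' : T.MinPre) (χq : T.MaxPre) (q' : T.Omega) (μ : T.MinPre)
    (hμ : T.MinBoundary μ) : T.MinBoundary (T.auxPhi μ' χq q' μ) := by
  intro r
  by_cases h : ∃ s', T.preTrans (Arena.FinRun.last r) (T.auxCandMin μ' χq q' r) s'
  · rw [auxPhi_eval_pos μ' χq q' μ r h]
    rfl
  · rw [auxPhi_eval_neg μ' χq q' μ r h]
    exact hμ r

end TimedGame
namespace TimedGame

variable {T : TimedGame}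

theorem auxPsi_couple (μq : T.MinPre) (χ' : T.MaxPre) (q' : T.Omega) (χ : T.MaxPre) (n : ℕ)
    (r₁ : T.PreRunF) (hr₁n : r₁.n = n)
    (hst : T.sameType r₁ (T.preArena.play μq χ' q' n))
    (hmax : (Arena.FinRun.last r₁).2.1 ∉ T.LMin) :
    ((T.auxPsi μq χ' q' χ).1 r₁).2 = (χ'.1 (T.preArena.play μq χ' q' n)).2 := by
  set r₂ := T.preArena.play μq χ' q' n with hr₂
  have hcand2 : (T.auxCandMax μq χ' q' r₁).2 = (χ'.1 r₂).2 := by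
    unfold auxCandMax
    rw [hr₁n]
  have hlast : (Arena.FinRun.last r₁).2 = (Arena.FinRun.last r₂).2 := aux_sameType_last hst
  have hmin₂ : ¬ T.preArena.IsMin (Arena.FinRun.last r₂) := by
    show ¬ (Arena.FinRun.last r₂).2.1 ∈ T.LMin
    rw [← hlast]
    exact hmax
  obtain ⟨s₂', hpt⟩ := χ'.2 r₂ hmin₂
  have hpt' : T.preTrans (Arena.FinRun.last r₂) (χ'.1 r₂) s₂' := hpt
  obtain ⟨hp0, hpts, hpact, hpeq⟩ := hpt'
  have e1 : (T.auxCandMax μq χ' q' r₁).2.1 = (χ'.1 r₂).2.1 := by rw [hcand2]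
  have e2 : (T.auxCandMax μq χ' q' r₁).2.2 = (χ'.1 r₂).2.2 := by rw [hcand2]
  have hvalid : ∃ s', T.preTrans (Arena.FinRun.last r₁) (T.auxCandMax μq χ' q' r₁) s' := by
    refine ⟨(T.tsucc (Arena.FinRun.last r₁).1
      ((T.auxCandMax μq χ' q' r₁).1, (T.auxCandMax μq χ' q' r₁).2.2), s₂'.2),
      ?_, ?_, ?_, rfl⟩
    · show 0 ≤ (T.auxCandMax μq χ' q' r₁).1
      unfold auxCandMax
      exact Real.sSup_nonneg fun x hx => hx.1
    · rw [e1, hlast]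
      exact hpts
    · rw [e1, e2]
      exact hpact
  rw [auxPsi_eval_pos μq χ' q' χ r₁ hvalid, hcand2]

theorem auxPhi_couple (μ' : T.MinPre) (χq : T.MaxPre) (q' : T.Omega) (μ : T.MinPre) (n : ℕ)
    (r₁ : T.PreRunF) (hr₁n : r₁.n = n)
    (hst : T.sameType r₁ (T.preArena.play μ' χq q' n))
    (hmin : (Arena.FinRun.last r₁).2.1 ∈ T.LMin) :
    ((T.auxPhi μ' χq q' μ).1 r₁).2 = (μ'.1 (T.preArena.play μ' χq q' n)).2 := by
  set r₂ := T.preArena.play μ' χq q' n with hr₂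
  have hcand2 : (T.auxCandMin μ' χq q' r₁).2 = (μ'.1 r₂).2 := by
    unfold auxCandMin
    rw [hr₁n]
  have hlast : (Arena.FinRun.last r₁).2 = (Arena.FinRun.last r₂).2 := aux_sameType_last hst
  have hmin₂ : T.preArena.IsMin (Arena.FinRun.last r₂) := by
    show (Arena.FinRun.last r₂).2.1 ∈ T.LMin
    rw [← hlast]
    exact hmin
  obtain ⟨s₂', hpt⟩ := μ'.2 r₂ hmin₂
  have hpt' : T.preTrans (Arena.FinRun.last r₂) (μ'.1 r₂) s₂' := hpt
  obtain ⟨hp0, hpts, hpact, hpeq⟩ := hpt'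
  have e1 : (T.auxCandMin μ' χq q' r₁).2.1 = (μ'.1 r₂).2.1 := by rw [hcand2]
  have e2 : (T.auxCandMin μ' χq q' r₁).2.2 = (μ'.1 r₂).2.2 := by rw [hcand2]
  have hvalid : ∃ s', T.preTrans (Arena.FinRun.last r₁) (T.auxCandMin μ' χq q' r₁) s' := by
    refine ⟨(T.tsucc (Arena.FinRun.last r₁).1
      ((T.auxCandMin μ' χq q' r₁).1, (T.auxCandMin μ' χq q' r₁).2.2), s₂'.2),
      ?_, ?_, ?_, rfl⟩
    · show 0 ≤ (T.auxCandMin μ' χq q' r₁).1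
      unfold auxCandMin
      exact Real.sInf_nonneg fun x hx => hx.1
    · rw [e1, hlast]
      exact hpts
    · rw [e1, e2]
      exact hpact
  rw [auxPhi_eval_pos μ' χq q' μ r₁ hvalid, hcand2]

end TimedGame

theorem typePreserving_mutual_best_responses' (T : TimedGame)
    (μ : T.MinPre) (χ : T.MaxPre) (hμ : T.MinBoundary μ) (hχ : T.MaxBoundary χ)
    (q : T.Omega) (hq : T.barS q)
    (hbrχ : ∀ χ' : T.MaxPre, T.MaxBoundary χ' →
      Arena.AMin T.preArena q μ χ' ≤ Arena.AMin T.preArena q μ χ)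
    (hbrμ : ∀ μ' : T.MinPre, T.MinBoundary μ' →
      Arena.AMax T.preArena q μ χ ≤ Arena.AMax T.preArena q μ' χ)
    (μq : T.MinPre) (χq : T.MaxPre) (hμq : T.MinTP μq) (hχq : T.MaxTP χq)
    (hagreeμ : ∀ r : T.PreRunF, r.q 0 = q → μq.1 r = μ.1 r)
    (hagreeχ : ∀ r : T.PreRunF, r.q 0 = q → χq.1 r = χ.1 r)
    (q' : T.Omega) (hq' : T.barS q') (hsame : q'.2 = q.2) :
    (∀ χ' : T.MaxPre, T.MaxBoundary χ' →
      Arena.AMin T.preArena q' μq χ' ≤ Arena.AMin T.preArena q' μq χq) ∧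
    (∀ μ' : T.MinPre, T.MinBoundary μ' →
      Arena.AMax T.preArena q' μq χq ≤ Arena.AMax T.preArena q' μ' χq) := by
  have hC : Nonempty T.C := by
    obtain ⟨b, c, -⟩ := (hμq.2 (T.preArena.single q) (T.preArena.single q) ⟨rfl, rfl⟩).2
    exact ⟨c⟩
  have hsim0 := T.aux_sim_payoff hC μ μq χ χq hμ hμq.1 hχ hχq.1 q q' hq hq' hsame.symm
    (fun n hst _ _ _ => by
      rw [← hagreeμ _ (Arena.aux_play_q0 μ χ q n)]
      exact (hμq.2 _ _ hst).1)
    (fun n hst _ _ _ => by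
      rw [← hagreeχ _ (Arena.aux_play_q0 μ χ q n)]
      exact (hχq.2 _ _ hst).1)
  constructor
  · intro χ' hbχ'
    have hbΨ := T.auxPsi_boundary μq χ' q' χ hχ
    have hsim1 := T.aux_sim_payoff hC μ μq (T.auxPsi μq χ' q' χ) χ' hμ hμq.1 hbΨ hbχ'
      q q' hq hq' hsame.symm
      (fun n hst _ _ _ => by
        rw [← hagreeμ _ (Arena.aux_play_q0 μ (T.auxPsi μq χ' q' χ) q n)]
        exact (hμq.2 _ _ hst).1)
      (fun n hst _ _ hmax => T.auxPsi_couple μq χ' q' χ n _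
        (Arena.aux_play_n μ (T.auxPsi μq χ' q' χ) q n) hst hmax)
    calc Arena.AMin T.preArena q' μq χ'
        = Arena.AMin T.preArena q μ (T.auxPsi μq χ' q' χ) := hsim1.1.symm
      _ ≤ Arena.AMin T.preArena q μ χ := hbrχ _ hbΨ
      _ = Arena.AMin T.preArena q' μq χq := hsim0.1
  · intro μ' hbμ'
    have hbΦ := T.auxPhi_boundary μ' χq q' μ hμ
    have hsim2 := T.aux_sim_payoff hC (T.auxPhi μ' χq q' μ) μ' χ χq hbΦ hbμ' hχ hχq.1
      q q' hq hq' hsame.symm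
      (fun n hst _ _ hmin => T.auxPhi_couple μ' χq q' μ n _
        (Arena.aux_play_n (T.auxPhi μ' χq q' μ) χ q n) hst hmin)
      (fun n hst _ _ _ => by
        rw [← hagreeχ _ (Arena.aux_play_q0 (T.auxPhi μ' χq q' μ) χ q n)]
        exact (hχq.2 _ _ hst).1)
    calc Arena.AMax T.preArena q' μq χq
        = Arena.AMax T.preArena q μ χ := hsim0.2.symm
      _ ≤ Arena.AMax T.preArena q (T.auxPhi μ' χq q' μ) χ := hbrμ _ hbΦ
      _ = Arena.AMax T.preArena q' μ' χq := hsim2.2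

/-- If boundary strategies `μ` and `χ` are mutual best responses from `q` in
the boundary region graph `T̂`, then type-preserving boundary strategies
agreeing with them on all finite runs starting from `q` are mutual best
responses from every configuration in the region of `q`. -/
theorem typePreserving_mutual_best_responses (T : TimedGame)
    (μ : T.MinPre) (χ : T.MaxPre) (hμ : T.MinBoundary μ) (hχ : T.MaxBoundary χ)
    (q : T.Omega) (hq : T.barS q)
    (hbrχ : ∀ χ' : T.MaxPre, T.MaxBoundary χ' →
      Arena.AMin T.preArena q μ χ' ≤ Arena.AMin T.preArena q μ χ)
    (hbrμ : ∀ μ' : T.MinPre, T.MinBoundary μ' →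
      Arena.AMax T.preArena q μ χ ≤ Arena.AMax T.preArena q μ' χ)
    (μq : T.MinPre) (χq : T.MaxPre) (hμq : T.MinTP μq) (hχq : T.MaxTP χq)
    (hagreeμ : ∀ r : T.PreRunF, r.q 0 = q → μq.1 r = μ.1 r)
    (hagreeχ : ∀ r : T.PreRunF, r.q 0 = q → χq.1 r = χ.1 r)
    (q' : T.Omega) (hq' : T.barS q') (hsame : q'.2 = q.2) :
    (∀ χ' : T.MaxPre, T.MaxBoundary χ' →
      Arena.AMin T.preArena q' μq χ' ≤ Arena.AMin T.preArena q' μq χq) ∧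
    (∀ μ' : T.MinPre, T.MinBoundary μ' →
      Arena.AMax T.preArena q' μq χq ≤ Arena.AMax T.preArena q' μ' χq) := by
  exact typePreserving_mutual_best_responses' T μ χ hμ hχ q hq hbrχ hbrμ μq χq hμq hχq
    hagreeμ hagreeχ q' hq' hsame
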